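/- Let C be a UCQ rewritable class of sets of tgds, Σ ∈ C a finite set of tgds, and q a conjunctive query. If q is semantically acyclic under Σ, then there exists an acyclic conjunctive query q' with at most 2·f_C(q,Σ) atoms such that q ≡_Σ q'. -/

import Mathlib

namespace SemAcPaper

/-! ## Terms, atoms, instances -/

/-- Terms: constants, labeled nulls and variables, each indexed by a natural number. -/
inductive Tm where
  | const : ℕ → Tm
  | null  : ℕ → Tm
  | var   : ℕ → Tm
deriving DecidableEq

def Tm.isVar : Tm → Prop
  | .var _ => True
  | _ => False

def Tm.isNull : Tm → Prop
  | .null _ => True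
  | _ => False

def Tm.isConst : Tm → Prop
  | .const _ => True
  | _ => False

/-- A relational atom: a relation symbol (a relation symbol is identified by a natural
number together with its arity, i.e. the length of the argument list) applied to a
list of terms. -/
structure Atom where
  rel : ℕ
  args : List Tm
deriving DecidableEq

def Atom.map (f : Tm → Tm) (a : Atom) : Atom := ⟨a.rel, a.args.map f⟩

/-- An instance is a (possibly infinite) set of atoms. -/
abbrev Inst := Set Atom

/-- A proper instance mentions only constants and nulls (no variables). -/
def IsInstance (I : Inst) : Prop := ∀ a ∈ I, ∀ t ∈ a.args, ¬ t.isVar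

/-- An instance is acyclic if it is empty or admits a join tree: a tree `T` together
with a labeling of its nodes by atoms of the instance such that every atom of the
instance labels some node, and for each term the set of nodes whose label mentions
that term induces a connected subgraph of `T`. -/
def AcyclicInst (I : Inst) : Prop :=
  I = ∅ ∨
  ∃ (V : Type) (T : SimpleGraph V) (lab : V → Atom),
    T.IsTree ∧
    (∀ v, lab v ∈ I) ∧
    (∀ a ∈ I, ∃ v, lab v = a) ∧
    (∀ t : Tm, (T.induce {v | t ∈ (lab v).args}).Preconnected)

/-! ## Conjunctive queries -/

/-- A conjunctive query: a tuple of free variables together with a finite set of atoms. -/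
structure CQ where
  free : List ℕ
  atoms : Finset Atom
deriving DecidableEq

/-- Variables occurring in a finite set of atoms. -/
def varsOf (s : Finset Atom) : Set ℕ := {v | ∃ a ∈ s, Tm.var v ∈ a.args}

/-- Well-formedness of a CQ: the free variables are pairwise distinct and occur in the
atoms, and the atoms mention no nulls (only variables and constants). -/
def CQ.wf (q : CQ) : Prop :=
  q.free.Nodup ∧ (∀ x ∈ q.free, x ∈ varsOf q.atoms) ∧
    ∀ a ∈ q.atoms, ∀ t ∈ a.args, ¬ t.isNull

/-- Extend an assignment of variables to a map on terms (identity on constants/nulls). -/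
def assign (h : ℕ → Tm) : Tm → Tm
  | .var v => h v
  | t => t

/-- `h` is a homomorphism from the query `q` into the instance `I`:
it assigns constants/nulls to variables and sends every atom of `q` into `I`. -/
def CQ.homOf (q : CQ) (h : ℕ → Tm) (I : Inst) : Prop :=
  (∀ v, ¬ (h v).isVar) ∧ ∀ a ∈ q.atoms, a.map (assign h) ∈ I

/-- Evaluation of a CQ over an instance. -/
def CQ.eval (q : CQ) (I : Inst) : Set (List Tm) :=
  {t | ∃ h : ℕ → Tm, q.homOf h I ∧ t = q.free.map h}

/-- Variables viewed as (labeled) nulls. -/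
def varToNull : Tm → Tm
  | .var v => .null v
  | t => t

/-- The instance formed by the atoms of a CQ, variables viewed as nulls
(this is also the canonical database of `q`, its variables frozen). -/
def CQ.inst (q : CQ) : Inst := (fun a : Atom => a.map varToNull) '' (↑q.atoms : Set Atom)

/-- A CQ is acyclic if the instance formed by its atoms is acyclic. -/
def CQ.Acyclic (q : CQ) : Prop := AcyclicInst q.inst

/-- The Gaifman graph of a set of atoms: vertices are variables, two distinct
variables are adjacent iff they occur together in some atom. -/
def gaifman (s : Finset Atom) : SimpleGraph ℕ :=
  SimpleGraph.fromRel (fun x y => ∃ a ∈ s, Tm.var x ∈ a.args ∧ Tm.var y ∈ a.args)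

/-- A set of atoms is connected if its Gaifman graph (on the variables occurring
in it) is connected. -/
def ConnectedAtoms (s : Finset Atom) : Prop :=
  ((gaifman s).induce (varsOf s)).Preconnected

def CQ.Connected (q : CQ) : Prop := ConnectedAtoms q.atoms

/-! ## Tuple-generating dependencies -/

/-- A tgd `∀x̄∀ȳ(φ(x̄,ȳ) → ∃z̄ ψ(x̄,z̄))`, represented by its body `φ` and head `ψ`;
the existentially quantified variables are those head variables not occurring
in the body. -/
structure TGD where
  body : Finset Atom
  head : Finset Atom
deriving DecidableEq

def TGD.wf (τ : TGD) : Prop :=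
  τ.body.Nonempty ∧ τ.head.Nonempty ∧
    ∀ a ∈ τ.body ∪ τ.head, ∀ t ∈ a.args, ¬ t.isNull

/-- Satisfaction of a tgd by an instance. -/
def TGD.holds (τ : TGD) (I : Inst) : Prop :=
  ∀ h : ℕ → Tm, (∀ v, ¬ (h v).isVar) → (∀ a ∈ τ.body, a.map (assign h) ∈ I) →
    ∃ h' : ℕ → Tm, (∀ v, ¬ (h' v).isVar) ∧ (∀ v ∈ varsOf τ.body, h' v = h v) ∧
      ∀ a ∈ τ.head, a.map (assign h') ∈ I

def SatTGDs (I : Inst) (S : Finset TGD) : Prop := ∀ τ ∈ S, τ.holds I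

/-- Containment of CQs under a finite set of tgds: `q ⊆_Σ q'`. -/
def ContUnder (S : Finset TGD) (q q' : CQ) : Prop :=
  ∀ I : Inst, IsInstance I → SatTGDs I S → q.eval I ⊆ q'.eval I

/-- Equivalence of CQs under a finite set of tgds: `q ≡_Σ q'`. -/
def EquivUnder (S : Finset TGD) (q q' : CQ) : Prop :=
  ContUnder S q q' ∧ ContUnder S q' q

/-- A CQ is semantically acyclic under `S` if it is equivalent under `S`
to an acyclic CQ (with a free-variable tuple of the same length). -/
def SemAcyclic (S : Finset TGD) (q : CQ) : Prop :=
  ∃ q' : CQ, q'.wf ∧ q'.Acyclic ∧ q'.free.length = q.free.length ∧ EquivUnder S q q'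

def TGD.BodyConnected (τ : TGD) : Prop := ConnectedAtoms τ.body

/-! ## Classes of tgds -/

/-- A tgd is guarded if some body atom contains all body variables. -/
def TGD.Guarded (τ : TGD) : Prop :=
  ∃ g ∈ τ.body, ∀ v ∈ varsOf τ.body, Tm.var v ∈ g.args

def GuardedClass : Set (Finset TGD) := {S | ∀ τ ∈ S, τ.Guarded}

/-- A tgd is full if it has no existentially quantified head variables. -/
def TGD.Full (τ : TGD) : Prop := varsOf τ.head ⊆ varsOf τ.body

def FullClass : Set (Finset TGD) := {S | ∀ τ ∈ S, τ.Full}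

/-- A tgd is linear if its body consists of a single atom. -/
def TGD.Linear (τ : TGD) : Prop := τ.body.card = 1

def Atom.varList (a : Atom) : List ℕ :=
  a.args.filterMap (fun t => match t with | Tm.var v => some v | _ => none)

/-- An inclusion dependency: a linear tgd with a single head atom and no repeated
variables in the body nor in the head. -/
def TGD.InclusionDep (τ : TGD) : Prop :=
  τ.body.card = 1 ∧ τ.head.card = 1 ∧
    (∀ a ∈ τ.body, a.varList.Nodup) ∧ ∀ a ∈ τ.head, a.varList.Nodup

def LinearClass : Set (Finset TGD) := {S | ∀ τ ∈ S, τ.Linear}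
def IDClass : Set (Finset TGD) := {S | ∀ τ ∈ S, τ.InclusionDep}

/-- Edge of the predicate graph of a set of tgds (predicates are pairs of a
relation name and an arity). -/
def pgEdge (S : Finset TGD) (P Q : ℕ × ℕ) : Prop :=
  ∃ τ ∈ S, (∃ a ∈ τ.body, (a.rel, a.args.length) = P) ∧
    ∃ a ∈ τ.head, (a.rel, a.args.length) = Q

/-- A set of tgds is non-recursive if its predicate graph has no directed cycle. -/
def NonRecursive (S : Finset TGD) : Prop := ∀ P, ¬ Relation.TransGen (pgEdge S) P P

def NRClass : Set (Finset TGD) := {S | NonRecursive S}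

/-- The marking procedure underlying stickiness: a body variable of a tgd of `S` is
marked if it does not occur in every head atom of that tgd (base step); markings are
propagated from heads to bodies: a variable occurring in the body of a tgd at a
position at which a marked variable occurs in the head of some tgd is marked. -/
inductive Marked (S : Finset TGD) : TGD → ℕ → Prop where
  | base (τ : TGD) (v : ℕ) : τ ∈ S → v ∈ varsOf τ.body →
      (∃ a ∈ τ.head, Tm.var v ∉ a.args) → Marked S τ v
  | prop (τ τ' : TGD) (v v' : ℕ) (R n i : ℕ) : τ ∈ S → τ' ∈ S →
      (∃ a ∈ τ.body, a.rel = R ∧ a.args.length = n ∧ a.args[i]? = some (Tm.var v)) →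
      Marked S τ' v' →
      (∃ a ∈ τ'.head, a.rel = R ∧ a.args.length = n ∧ a.args[i]? = some (Tm.var v')) →
      Marked S τ v

/-- A set of tgds is sticky if no tgd contains two occurrences of a marked variable. -/
def Sticky (S : Finset TGD) : Prop :=
  ∀ τ ∈ S, ∀ v : ℕ, Marked S τ v →
    (τ.body.sum fun a => a.args.count (Tm.var v)) ≤ 1

def StickyClass : Set (Finset TGD) := {S | Sticky S}

/-! ## The chase for tgds -/

def nullsOf (I : Inst) : Set ℕ := {n | ∃ a ∈ I, Tm.null n ∈ a.args}

/-- The existential variables of a tgd. -/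
def TGD.exVars (τ : TGD) : Set ℕ := varsOf τ.head \ varsOf τ.body

/-- A single chase step: a trigger `h` for the body of `τ` in `I` is extended to `h'`
mapping each existential variable to a fresh distinct null, and the corresponding
head atoms are added. -/
def ChaseStep (τ : TGD) (I J : Inst) : Prop :=
  ∃ h h' : ℕ → Tm,
    (∀ v, ¬ (h v).isVar) ∧
    (∀ a ∈ τ.body, a.map (assign h) ∈ I) ∧
    (∀ v, ¬ (h' v).isVar) ∧
    (∀ v ∈ varsOf τ.body, h' v = h v) ∧
    (∀ v ∈ τ.exVars, ∃ m, h' v = Tm.null m ∧ m ∉ nullsOf I) ∧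
    (∀ v ∈ τ.exVars, ∀ w ∈ τ.exVars, h' v = h' w → v = w) ∧
    J = I ∪ (fun a : Atom => a.map (assign h')) '' (↑τ.head : Set Atom)

/-- A chase sequence for a CQ `q` under a finite set `S` of tgds: it starts from the
canonical instance of `q`, each step either applies a tgd of `S` or leaves the
instance unchanged, and the union of the sequence satisfies `S`. -/
structure ChaseSeq (S : Finset TGD) (q : CQ) where
  seq : ℕ → Inst
  init : seq 0 = q.inst
  step : ∀ i, seq (i + 1) = seq i ∨ ∃ τ ∈ S, ChaseStep τ (seq i) (seq (i + 1))
  sat : SatTGDs (⋃ i, seq i) S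

/-- The result of a chase sequence. -/
def ChaseSeq.result {S : Finset TGD} {q : CQ} (c : ChaseSeq S q) : Inst := ⋃ i, c.seq i

/-- A class of sets of tgds has acyclicity-preserving chase if for every acyclic CQ,
every set of the class and every chase sequence, the result of the chase sequence
is an acyclic instance. -/
def APChase (C : Set (Finset TGD)) : Prop :=
  ∀ q : CQ, q.wf → q.Acyclic → ∀ S ∈ C, ∀ c : ChaseSeq S q, AcyclicInst c.result

/-! ## Equality-generating dependencies -/

/-- An egd `∀x̄(φ(x̄) → x_i = x_j)`. -/
structure EGD where
  body : Finset Atom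
  lhs : ℕ
  rhs : ℕ
deriving DecidableEq

def EGD.wf (ε : EGD) : Prop :=
  (∀ a ∈ ε.body, ∀ t ∈ a.args, ¬ t.isNull) ∧
    ε.lhs ∈ varsOf ε.body ∧ ε.rhs ∈ varsOf ε.body

def EGD.holds (ε : EGD) (I : Inst) : Prop :=
  ∀ h : ℕ → Tm, (∀ v, ¬ (h v).isVar) → (∀ a ∈ ε.body, a.map (assign h) ∈ I) →
    h ε.lhs = h ε.rhs

def SatEGDs (I : Inst) (S : Finset EGD) : Prop := ∀ ε ∈ S, ε.holds I

def ContUnderE (S : Finset EGD) (q q' : CQ) : Prop :=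
  ∀ I : Inst, IsInstance I → SatEGDs I S → q.eval I ⊆ q'.eval I

def EquivUnderE (S : Finset EGD) (q q' : CQ) : Prop :=
  ContUnderE S q q' ∧ ContUnderE S q' q

def SemAcyclicE (S : Finset EGD) (q : CQ) : Prop :=
  ∃ q' : CQ, q'.wf ∧ q'.Acyclic ∧ q'.free.length = q.free.length ∧ EquivUnderE S q q'

/-- Substitute the term `t` by `t'`. -/
def substTm (t t' : Tm) : Tm → Tm := fun s => if s = t then t' else s

/-- A single egd chase step: an applicable egd identifies the two (distinct) terms,
replacing a null by the other term everywhere. -/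
def EGDChaseStep (ε : EGD) (I J : Inst) : Prop :=
  ∃ h : ℕ → Tm,
    (∀ v, ¬ (h v).isVar) ∧ (∀ a ∈ ε.body, a.map (assign h) ∈ I) ∧
    h ε.lhs ≠ h ε.rhs ∧
    (((h ε.lhs).isNull ∧ J = (fun a => a.map (substTm (h ε.lhs) (h ε.rhs))) '' I) ∨
     ((h ε.rhs).isNull ∧ J = (fun a => a.map (substTm (h ε.rhs) (h ε.lhs))) '' I))

/-- `J` is the result of a chase sequence for `q` under the egds `S`: it is obtained
from the canonical instance of `q` (variables treated as nulls) by finitely many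
egd chase steps and satisfies `S`. -/
def EGDChaseResult (S : Finset EGD) (q : CQ) (J : Inst) : Prop :=
  Relation.ReflTransGen (fun I₁ I₂ => ∃ ε ∈ S, EGDChaseStep ε I₁ I₂) q.inst J ∧
    SatEGDs J S

/-- Acyclicity-preserving chase for classes of sets of egds. -/
def APChaseE (C : Set (Finset EGD)) : Prop :=
  ∀ q : CQ, q.wf → q.Acyclic → ∀ S ∈ C, ∀ J, EGDChaseResult S q J → AcyclicInst J

/-- `ε` is a key dependency over an `n`-ary predicate: its body consists of two
atoms over the same predicate agreeing (sharing a variable) exactly on the key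
positions `A`, all other variables being pairwise distinct, and it equates the
variables at the unique non-key position `j`. -/
def EGD.IsKey (ε : EGD) (n : ℕ) : Prop :=
  ∃ (R : ℕ) (A : Finset (Fin n)) (x y : Fin n → ℕ) (j : Fin n),
    Function.Injective x ∧ Function.Injective y ∧
    (∀ i i', x i = y i' ↔ (i = i' ∧ i ∈ A)) ∧
    j ∉ A ∧ insert j A = Finset.univ ∧
    ε.body = {⟨R, List.ofFn (fun i => Tm.var (x i))⟩, ⟨R, List.ofFn (fun i => Tm.var (y i))⟩} ∧
    ε.lhs = x j ∧ ε.rhs = y j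

/-- The class of finite sets of keys over unary and binary predicates. -/
def K2Class : Set (Finset EGD) := {S | ∀ ε ∈ S, ε.IsKey 1 ∨ ε.IsKey 2}

/-! ## Encodings -/

def tmEquiv : Tm ≃ (ℕ ⊕ ℕ ⊕ ℕ) where
  toFun t := match t with
    | .const n => Sum.inl n
    | .null n => Sum.inr (Sum.inl n)
    | .var n => Sum.inr (Sum.inr n)
  invFun s := match s with
    | Sum.inl n => .const n
    | Sum.inr (Sum.inl n) => .null n
    | Sum.inr (Sum.inr n) => .var n
  left_inv t := by cases t <;> rfl
  right_inv s := by rcases s with _ | (_ | _) <;> rfl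

instance : Encodable Tm := Encodable.ofEquiv _ tmEquiv

def atomEquiv : Atom ≃ ℕ × List Tm where
  toFun a := (a.rel, a.args)
  invFun p := ⟨p.1, p.2⟩
  left_inv _ := rfl
  right_inv _ := rfl

instance : Encodable Atom := Encodable.ofEquiv _ atomEquiv

def cqEquiv : CQ ≃ List ℕ × Finset Atom where
  toFun q := (q.free, q.atoms)
  invFun p := ⟨p.1, p.2⟩
  left_inv _ := rfl
  right_inv _ := rfl

instance : Encodable CQ := Encodable.ofEquiv _ cqEquiv

def tgdEquiv : TGD ≃ Finset Atom × Finset Atom where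
  toFun τ := (τ.body, τ.head)
  invFun p := ⟨p.1, p.2⟩
  left_inv _ := rfl
  right_inv _ := rfl

instance : Encodable TGD := Encodable.ofEquiv _ tgdEquiv

def egdEquiv : EGD ≃ Finset Atom × ℕ × ℕ where
  toFun ε := (ε.body, ε.lhs, ε.rhs)
  invFun p := ⟨p.1, p.2.1, p.2.2⟩
  left_inv _ := rfl
  right_inv _ := rfl

instance : Encodable EGD := Encodable.ofEquiv _ egdEquiv

/-- The canonical encoding of an input as a binary string. -/
def encLB {α : Type} [Encodable α] (a : α) : List Bool := (Encodable.encode a).bits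

end SemAcPaper
namespace SemAcPaper

/-! ## A Turing machine model and complexity classes

Deterministic single-tape Turing machines over the tape alphabet `Option Bool`
(`none` is the blank symbol), with a finite set of states `{0, …, states - 1}`.
The machine halts when the transition function returns `none`; it accepts iff it
halts with the symbol `some true` under its head. -/

inductive Move where
  | left | right | stay
deriving DecidableEq

def Move.offset : Move → ℤ
  | .left => -1
  | .right => 1
  | .stay => 0

structure TM where
  states : ℕ
  start : ℕ
  start_lt : start < states
  trans : ℕ → Option Bool → Option (ℕ × Option Bool × Move)
  trans_lt : ∀ p s r w m, trans p s = some (r, w, m) → r < states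

structure Cfg where
  state : ℕ
  head : ℤ
  tape : ℤ → Option Bool

/-- The initial configuration on input `x`: the input is written in cells
`0, …, x.length - 1`, all other cells are blank, head on cell `0`. -/
def TM.initCfg (M : TM) (x : List Bool) : Cfg :=
  ⟨M.start, 0, fun i => if 0 ≤ i ∧ i.toNat < x.length then some (x.getD i.toNat false) else none⟩

def TM.stepCfg (M : TM) (c : Cfg) : Option Cfg :=
  match M.trans c.state (c.tape c.head) with
  | none => none
  | some (r, w, m) => some ⟨r, c.head + m.offset, Function.update c.tape c.head w⟩

/-- `n` steps of the machine (staying put once halted). -/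
def TM.stepN (M : TM) : ℕ → Cfg → Cfg
  | 0, c => c
  | n + 1, c =>
    match M.stepCfg c with
    | none => c
    | some c' => M.stepN n c'

def TM.halted (M : TM) (c : Cfg) : Prop := M.stepCfg c = none

def Cfg.accepts (c : Cfg) : Prop := c.tape c.head = some true

/-- `M` decides the language `L` within time `T` (as a function of the input length). -/
def TM.DecidesInTime (M : TM) (L : Set (List Bool)) (T : ℕ → ℕ) : Prop :=
  ∀ x : List Bool, ∃ n ≤ T x.length,
    M.halted (M.stepN n (M.initCfg x)) ∧ ((M.stepN n (M.initCfg x)).accepts ↔ x ∈ L)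

/-- `M` decides the language `L` within space `Sp`: it halts with the correct answer
having visited only cells at distance at most `Sp` of the input length from the origin. -/
def TM.DecidesInSpace (M : TM) (L : Set (List Bool)) (Sp : ℕ → ℕ) : Prop :=
  ∀ x : List Bool, ∃ n,
    M.halted (M.stepN n (M.initCfg x)) ∧ ((M.stepN n (M.initCfg x)).accepts ↔ x ∈ L) ∧
    ∀ m ≤ n, ((M.stepN m (M.initCfg x)).head).natAbs ≤ Sp x.length

def InTIME (T : ℕ → ℕ) (L : Set (List Bool)) : Prop := ∃ M : TM, M.DecidesInTime L T

def InSPACE (Sp : ℕ → ℕ) (L : Set (List Bool)) : Prop := ∃ M : TM, M.DecidesInSpace L Sp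

/-- Deterministic polynomial time. -/
def Pclass : Set (Set (List Bool)) := {L | ∃ k, InTIME (fun n => (n + 2) ^ k) L}

/-- Deterministic exponential time. -/
def EXPclass : Set (Set (List Bool)) := {L | ∃ k, InTIME (fun n => 2 ^ ((n + 2) ^ k)) L}

/-- Deterministic double exponential time. -/
def TwoEXPclass : Set (Set (List Bool)) := {L | ∃ k, InTIME (fun n => 2 ^ 2 ^ ((n + 2) ^ k)) L}

/-- Polynomial space. -/
def PSPACEclass : Set (Set (List Bool)) := {L | ∃ k, InSPACE (fun n => (n + 2) ^ k) L}

/-- An injective pairing of binary strings. -/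
def pairLB (x y : List Bool) : List Bool := (x.flatMap fun b => [b, b]) ++ [true, false] ++ y

/-- `NP` via polynomial-time verifiers and polynomial-length certificates. -/
def NPclass : Set (Set (List Bool)) :=
  {L | ∃ (k : ℕ) (V : Set (List Bool)), V ∈ Pclass ∧
        ∀ x, x ∈ L ↔ ∃ y : List Bool, y.length ≤ (x.length + 2) ^ k ∧ pairLB x y ∈ V}

/-- `NEXPTIME` via polynomial-time verifiers and exponential-length certificates. -/
def NEXPclass : Set (Set (List Bool)) :=
  {L | ∃ (k : ℕ) (V : Set (List Bool)), V ∈ Pclass ∧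
        ∀ x, x ∈ L ↔ ∃ y : List Bool, y.length ≤ 2 ^ ((x.length + 2) ^ k) ∧ pairLB x y ∈ V}

/-- `M` computes the function `f` within time `T`: it halts with exactly `f x`
written in the cells `0, …` of the tape. -/
def TM.ComputesInTime (M : TM) (f : List Bool → List Bool) (T : ℕ → ℕ) : Prop :=
  ∀ x, ∃ n ≤ T x.length,
    M.halted (M.stepN n (M.initCfg x)) ∧
    (M.stepN n (M.initCfg x)).tape =
      (fun i => if 0 ≤ i ∧ i.toNat < (f x).length then some ((f x).getD i.toNat false) else none)

def PolyTimeComputable (f : List Bool → List Bool) : Prop :=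
  ∃ (k : ℕ) (M : TM), M.ComputesInTime f (fun n => (n + 2) ^ k)

/-- Polynomial-time many-one reducibility. -/
def PolyReducible (L₁ L₂ : Set (List Bool)) : Prop :=
  ∃ f, PolyTimeComputable f ∧ ∀ x, x ∈ L₁ ↔ f x ∈ L₂

/-- `L` is hard for the complexity class `Cl` under polynomial-time reductions. -/
def HardFor (Cl : Set (Set (List Bool))) (L : Set (List Bool)) : Prop :=
  ∀ L' ∈ Cl, PolyReducible L' L

/-- `L` is complete for the complexity class `Cl` under polynomial-time reductions. -/
def CompleteFor (Cl : Set (Set (List Bool))) (L : Set (List Bool)) : Prop :=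
  L ∈ Cl ∧ HardFor Cl L

end SemAcPaper
namespace SemAcPaper

/-! ## Decision problems as languages of binary strings -/

/-- The language of the problem `SemAc(C)`: encodings of pairs of a well-formed CQ `q`
and a finite set `S ∈ C` of well-formed tgds such that `q` is semantically acyclic
under `S`. -/
def L_SemAc (C : Set (Finset TGD)) : Set (List Bool) :=
  {w | ∃ (q : CQ) (S : Finset TGD), q.wf ∧ (∀ τ ∈ S, τ.wf) ∧ S ∈ C ∧
        w = encLB (q, S) ∧ SemAcyclic S q}

def CQ.arityLE (q : CQ) (r : ℕ) : Prop := ∀ a ∈ q.atoms, a.args.length ≤ r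
def TGD.arityLE (τ : TGD) (r : ℕ) : Prop := ∀ a ∈ τ.body ∪ τ.head, a.args.length ≤ r
def EGD.arityLE (ε : EGD) (r : ℕ) : Prop := ∀ a ∈ ε.body, a.args.length ≤ r

/-- `SemAc(C)` restricted to schemas whose arity is bounded by the fixed `r`. -/
def L_SemAcAr (C : Set (Finset TGD)) (r : ℕ) : Set (List Bool) :=
  {w | ∃ (q : CQ) (S : Finset TGD), q.wf ∧ (∀ τ ∈ S, τ.wf) ∧ S ∈ C ∧
        q.arityLE r ∧ (∀ τ ∈ S, τ.arityLE r) ∧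
        w = encLB (q, S) ∧ SemAcyclic S q}

def CQ.overSchema (q : CQ) (sch : Finset (ℕ × ℕ)) : Prop :=
  ∀ a ∈ q.atoms, (a.rel, a.args.length) ∈ sch
def TGD.overSchema (τ : TGD) (sch : Finset (ℕ × ℕ)) : Prop :=
  ∀ a ∈ τ.body ∪ τ.head, (a.rel, a.args.length) ∈ sch

/-- `SemAc(C)` restricted to a fixed schema `sch` (a finite set of relation symbols,
i.e. of pairs of a relation name and an arity). -/
def L_SemAcSch (C : Set (Finset TGD)) (sch : Finset (ℕ × ℕ)) : Set (List Bool) :=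
  {w | ∃ (q : CQ) (S : Finset TGD), q.wf ∧ (∀ τ ∈ S, τ.wf) ∧ S ∈ C ∧
        q.overSchema sch ∧ (∀ τ ∈ S, τ.overSchema sch) ∧
        w = encLB (q, S) ∧ SemAcyclic S q}

/-- The language of the problem `AcBoolCont(C)`: encodings of triples of an acyclic
Boolean CQ `q`, a Boolean CQ `q'` and a finite set `S ∈ C` of tgds with `q ⊆_S q'`. -/
def L_AcBoolCont (C : Set (Finset TGD)) : Set (List Bool) :=
  {w | ∃ (q q' : CQ) (S : Finset TGD), q.wf ∧ q'.wf ∧ (∀ τ ∈ S, τ.wf) ∧ S ∈ C ∧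
        q.free = [] ∧ q'.free = [] ∧ q.Acyclic ∧
        w = encLB (q, q', S) ∧ ContUnder S q q'}

/-- The language of the problem `SemAc(C)` for a class `C` of sets of egds. -/
def L_SemAcE (C : Set (Finset EGD)) : Set (List Bool) :=
  {w | ∃ (q : CQ) (S : Finset EGD), q.wf ∧ (∀ ε ∈ S, ε.wf) ∧ S ∈ C ∧
        w = encLB (q, S) ∧ SemAcyclicE S q}

/-- `SemAc(C)` for egds, restricted to schemas whose arity is bounded by `r`. -/
def L_SemAcEAr (C : Set (Finset EGD)) (r : ℕ) : Set (List Bool) :=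
  {w | ∃ (q : CQ) (S : Finset EGD), q.wf ∧ (∀ ε ∈ S, ε.wf) ∧ S ∈ C ∧
        q.arityLE r ∧ (∀ ε ∈ S, ε.arityLE r) ∧
        w = encLB (q, S) ∧ SemAcyclicE S q}

end SemAcPaper

namespace SemAcPaper

/-! ### Unions of conjunctive queries and UCQ rewritability -/

/-- A union of conjunctive queries, and its evaluation. -/
def UCQeval (Q : List CQ) (I : Inst) : Set (List Tm) := {t | ∃ p ∈ Q, t ∈ p.eval I}

/-- A shift large enough so that the constants `c(x)` below are fresh for `q`. -/
def CQ.constShift (q : CQ) : ℕ :=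
  (q.atoms.sup fun a =>
    (a.args.filterMap fun t => match t with | Tm.const n => some n | _ => none).foldr max 0) + 1

/-- The fresh constant `c(x)` associated with the variable `x` of `q`. -/
def CQ.canonConst (q : CQ) (v : ℕ) : Tm := Tm.const (v + q.constShift)

/-- The database `D_q` obtained from `q` by replacing each variable `x` with the
constant `c(x)`. -/
def CQ.canonDB (q : CQ) : Inst :=
  (fun a : Atom => a.map (assign fun v => q.canonConst v)) '' (↑q.atoms : Set Atom)

/-- The tuple `c(x̄)` of constants associated with the free variables of `q`. -/
def CQ.canonTuple (q : CQ) : List Tm := q.free.map q.canonConst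

/-- `Q` is a UCQ rewriting of `q` and `S`: for every CQ `q'(x̄)`, `q' ⊆_S q` iff
`c(x̄) ∈ Q(D_q')`. -/
def IsUCQRewriting (S : Finset TGD) (q : CQ) (Q : List CQ) : Prop :=
  ∀ q' : CQ, q'.wf → (ContUnder S q' q ↔ q'.canonTuple ∈ UCQeval Q q'.canonDB)

/-- A class `C` of sets of tgds is UCQ rewritable if every CQ `q` and every
`S ∈ C` admit a UCQ rewriting. -/
def UCQRewritable (C : Set (Finset TGD)) : Prop :=
  ∀ (q : CQ) (S : Finset TGD), q.wf → (∀ τ ∈ S, τ.wf) → S ∈ C →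
    ∃ Q : List CQ, IsUCQRewriting S q Q

section ListAux
variable {α : Type*}

noncomputable def firstIn : List α → Set α → Option α
  | [], _ => none
  | a :: l, s => have := Classical.propDecidable (a ∈ s); if a ∈ s then some a else firstIn l s

lemma firstIn_cons_pos {a : α} {l : List α} {s : Set α} (h : a ∈ s) :
    firstIn (a :: l) s = some a := by simp [firstIn, h]

lemma firstIn_cons_neg {a : α} {l : List α} {s : Set α} (h : a ∉ s) :
    firstIn (a :: l) s = firstIn l s := by simp [firstIn, h]

lemma firstIn_isSome {l : List α} {s : Set α} {x₀ : α} (h1 : x₀ ∈ l) (h2 : x₀ ∈ s) :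
    ∃ m, firstIn l s = some m := by
  induction l with
  | nil => simp at h1
  | cons a l ih =>
    by_cases ha : a ∈ s
    · exact ⟨a, firstIn_cons_pos ha⟩
    · rcases List.mem_cons.mp h1 with rfl | h1
      · exact absurd h2 ha
      · obtain ⟨m, hm⟩ := ih h1
        exact ⟨m, by rw [firstIn_cons_neg ha, hm]⟩

lemma firstIn_spec {l : List α} {s : Set α} {m : α} (h : firstIn l s = some m) :
    ∃ l₁ l₂, l = l₁ ++ m :: l₂ ∧ m ∈ s ∧ ∀ z ∈ l₁, z ∉ s := by
  induction l with
  | nil => simp [firstIn] at h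
  | cons a l ih =>
    by_cases ha : a ∈ s
    · rw [firstIn_cons_pos ha] at h
      cases h
      exact ⟨[], l, rfl, ha, by simp⟩
    · rw [firstIn_cons_neg ha] at h
      obtain ⟨l₁, l₂, e, hm, hfail⟩ := ih h
      refine ⟨a :: l₁, l₂, by simp [e], hm, ?_⟩
      intro z hz
      rcases List.mem_cons.mp hz with rfl | hz
      · exact ha
      · exact hfail z hz

lemma firstIn_append_left_none {l₁ l₂ : List α} {s : Set α} (h : ∀ z ∈ l₁, z ∉ s) :
    firstIn (l₁ ++ l₂) s = firstIn l₂ s := by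
  induction l₁ with
  | nil => rfl
  | cons a l ih =>
    rw [List.cons_append, firstIn_cons_neg (h a (by simp))]
    exact ih (fun z hz => h z (by simp [hz]))

lemma split_unique {m : α} : ∀ {l₁ r₁ l₂ r₂ : List α},
    l₁ ++ m :: l₂ = r₁ ++ m :: r₂ → m ∉ l₁ → m ∉ r₁ → l₁ = r₁ ∧ l₂ = r₂ := by
  intro l₁
  induction l₁ with
  | nil =>
    intro r₁ l₂ r₂ h h1 h2
    cases r₁ with
    | nil => simpa using h
    | cons b r =>
      simp only [List.nil_append, List.cons_append, List.cons.injEq] at h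
      exact absurd (h.1 ▸ List.mem_cons_self) h2
  | cons a l ih =>
    intro r₁ l₂ r₂ h h1 h2
    cases r₁ with
    | nil =>
      simp only [List.nil_append, List.cons_append, List.cons.injEq] at h
      exact absurd (h.1 ▸ List.mem_cons_self) h1
    | cons b r =>
      simp only [List.cons_append, List.cons.injEq] at h
      obtain ⟨rfl, h⟩ := h
      obtain ⟨e1, e2⟩ := ih h (fun hm => h1 (List.mem_cons_of_mem _ hm))
        (fun hm => h2 (List.mem_cons_of_mem _ hm))
      exact ⟨by rw [e1], e2⟩

lemma suffix_antisymm {s₁ s₂ : List α} (h1 : s₁ <:+ s₂) (h2 : s₂ <:+ s₁) : s₁ = s₂ :=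
  h1.sublist.antisymm h2.sublist

lemma le_foldr_max (l : List ℕ) {x : ℕ} (h : x ∈ l) : x ≤ l.foldr max 0 := by
  induction l with
  | nil => simp at h
  | cons a l ih =>
    rcases List.mem_cons.mp h with rfl | h
    · exact le_max_of_le_left le_rfl
    · exact le_max_of_le_right (ih h)

end ListAux

section TreeAux

open SimpleGraph

variable {V : Type} {T : SimpleGraph V} (hT : T.IsTree) (r : V)

noncomputable def pathTo (v : V) : T.Walk v r := (hT.existsUnique_path v r).exists.choose

lemma pathTo_isPath (v : V) : (pathTo hT r v).IsPath :=
  (hT.existsUnique_path v r).exists.choose_spec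

lemma pathTo_unique {v : V} (w : T.Walk v r) (hw : w.IsPath) : w = pathTo hT r v := by
  obtain ⟨p, hp, hu⟩ := hT.existsUnique_path v r
  rw [hu w hw, hu _ (pathTo_isPath hT r v)]

/-- The support of the unique path from `v` to the root `r`. -/
noncomputable def RA (v : V) : List V := (pathTo hT r v).support

lemma ra_start (v : V) : v ∈ RA hT r v := SimpleGraph.Walk.start_mem_support _

lemma ra_end (v : V) : r ∈ RA hT r v := SimpleGraph.Walk.end_mem_support _

lemma ra_cons (v : V) : RA hT r v = v :: (RA hT r v).tail :=
  SimpleGraph.Walk.support_eq_cons _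

lemma ra_nodup (v : V) : (RA hT r v).Nodup := (pathTo_isPath hT r v).support_nodup

lemma ra_chain (v : V) : List.Chain' T.Adj (RA hT r v) :=
  SimpleGraph.Walk.isChain_adj_support _

lemma ra_ne_nil (v : V) : RA hT r v ≠ [] := SimpleGraph.Walk.support_ne_nil _

lemma ra_root : RA hT r r = [r] := by
  have h : (SimpleGraph.Walk.nil : T.Walk r r) = pathTo hT r r :=
    pathTo_unique hT r SimpleGraph.Walk.nil SimpleGraph.Walk.IsPath.nil
  unfold RA
  rw [← h]
  rfl

lemma walk_support_concat {a b : V} (w : T.Walk a b) :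
    ∃ t, w.support = t ++ [b] := by
  refine ⟨w.reverse.support.tail.reverse, ?_⟩
  have h1 : w.reverse.support = w.support.reverse := SimpleGraph.Walk.support_reverse w
  have h2 : w.reverse.support = b :: w.reverse.support.tail :=
    SimpleGraph.Walk.support_eq_cons _
  have h3 : w.support.reverse = b :: w.reverse.support.tail := by rw [← h1]; exact h2
  calc w.support = w.support.reverse.reverse := by simp
    _ = (b :: w.reverse.support.tail).reverse := by rw [h3]
    _ = w.reverse.support.tail.reverse ++ [b] := by simp

lemma ra_suffix {u v : V} (h : u ∈ RA hT r v) : RA hT r u <:+ RA hT r v := by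
  classical
  set p := pathTo hT r v with hp
  have hmem : u ∈ p.support := h
  have hdp : (p.dropUntil u hmem).IsPath := (pathTo_isPath hT r v).dropUntil hmem
  have e1 : p.dropUntil u hmem = pathTo hT r u := pathTo_unique hT r _ hdp
  have e2 : (p.takeUntil u hmem).append (p.dropUntil u hmem) = p :=
    SimpleGraph.Walk.take_spec p hmem
  have e3 : p.support = (p.takeUntil u hmem).support ++ (p.dropUntil u hmem).support.tail := by
    conv_lhs => rw [← e2]
    exact SimpleGraph.Walk.support_append _ _
  obtain ⟨t, e5⟩ := walk_support_concat (p.takeUntil u hmem)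
  refine ⟨t, ?_⟩
  have e6 : RA hT r u = u :: (RA hT r u).tail := ra_cons hT r u
  have e7 : RA hT r u = (p.dropUntil u hmem).support := by rw [RA, ← e1]
  calc t ++ RA hT r u = t ++ (u :: (RA hT r u).tail) := by rw [← e6]
    _ = (t ++ [u]) ++ (RA hT r u).tail := by simp
    _ = (p.takeUntil u hmem).support ++ ((p.dropUntil u hmem).support).tail := by
        rw [← e5, e7]
    _ = p.support := e3.symm
    _ = RA hT r v := rfl

lemma ra_mem_trans {u v w : V} (h1 : u ∈ RA hT r v) (h2 : v ∈ RA hT r w) :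
    u ∈ RA hT r w := (ra_suffix hT r h2).subset h1

lemma ra_eq_of_mem_mem {u v : V} (h1 : u ∈ RA hT r v) (h2 : v ∈ RA hT r u) : u = v := by
  have e := suffix_antisymm (ra_suffix hT r h1) (ra_suffix hT r h2)
  have hu := ra_cons hT r u
  have hv := ra_cons hT r v
  rw [hu, hv] at e
  exact (List.cons.injEq _ _ _ _ ▸ e).1

/-- Splitting off the root path of an element of a root path. -/
lemma ra_decomp {x m' : V} {l₁ l₂ : List V} (e : RA hT r x = l₁ ++ m' :: l₂)
    (hne : m' ∉ l₁) : RA hT r m' = m' :: l₂ := by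
  have hm : m' ∈ RA hT r x := by rw [e]; exact List.mem_append_right _ (List.mem_cons_self)
  obtain ⟨pre, hpre⟩ := ra_suffix hT r hm
  have hcons := ra_cons hT r m'
  have hnd : (RA hT r x).Nodup := ra_nodup hT r x
  have hpre' : pre ++ m' :: (RA hT r m').tail = l₁ ++ m' :: l₂ := by
    rw [← hcons, hpre, e]
  have hmp : m' ∉ pre := by
    intro hmem
    have : (pre ++ RA hT r m').Nodup := by rw [hpre]; exact hnd
    exact (List.disjoint_of_nodup_append this) hmem (by rw [hcons]; exact List.mem_cons_self)
  obtain ⟨-, e2⟩ := split_unique hpre' hmp hne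
  rw [hcons, e2]

end TreeAux

section MeetAux

open SimpleGraph

variable {V : Type} {T : SimpleGraph V} (hT : T.IsTree) (r : V)

/-- The meet (towards the root `r`) of two vertices of the tree. -/
noncomputable def meet (x y : V) : V :=
  (firstIn (RA hT r x) {v | v ∈ RA hT r y}).getD r

lemma meet_spec (x y : V) :
    ∃ l₁ l₂, RA hT r x = l₁ ++ meet hT r x y :: l₂ ∧ meet hT r x y ∈ RA hT r y ∧
      ∀ z ∈ l₁, z ∉ RA hT r y := by
  obtain ⟨m, hm⟩ := firstIn_isSome (l := RA hT r x) (s := {v | v ∈ RA hT r y})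
    (ra_end hT r x) (ra_end hT r y)
  obtain ⟨l₁, l₂, e, h1, h2⟩ := firstIn_spec hm
  rw [meet, hm]
  exact ⟨l₁, l₂, e, h1, h2⟩

lemma meet_mem_left (x y : V) : meet hT r x y ∈ RA hT r x := by
  obtain ⟨l₁, l₂, e, _, _⟩ := meet_spec hT r x y
  rw [e]
  exact List.mem_append_right _ (List.mem_cons_self)

lemma meet_mem_right (x y : V) : meet hT r x y ∈ RA hT r y :=
  (meet_spec hT r x y).choose_spec.choose_spec.2.1

lemma mem_ra_meet {x y v : V} (h1 : v ∈ RA hT r x) (h2 : v ∈ RA hT r y) :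
    v ∈ RA hT r (meet hT r x y) := by
  obtain ⟨l₁, l₂, e, hm, hfail⟩ := meet_spec hT r x y
  have hnm : meet hT r x y ∉ l₁ := fun hmem => hfail _ hmem hm
  have hra : RA hT r (meet hT r x y) = meet hT r x y :: l₂ := ra_decomp hT r e hnm
  rw [e] at h1
  rcases List.mem_append.mp h1 with h | h
  · exact absurd h2 (hfail _ h)
  · rw [hra]; exact h

lemma meet_comm (x y : V) : meet hT r x y = meet hT r y x := by
  have h1 : meet hT r x y ∈ RA hT r (meet hT r y x) :=
    mem_ra_meet hT r (meet_mem_right hT r x y) (meet_mem_left hT r x y)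
  have h2 : meet hT r y x ∈ RA hT r (meet hT r x y) :=
    mem_ra_meet hT r (meet_mem_right hT r y x) (meet_mem_left hT r y x)
  exact ra_eq_of_mem_mem hT r h1 h2

lemma meet_left_of_mem {x y : V} (h : x ∈ RA hT r y) : meet hT r x y = x := by
  rw [meet, ra_cons hT r x, firstIn_cons_pos (show x ∈ {v | v ∈ RA hT r y} from h)]
  rfl

lemma meet_self (x : V) : meet hT r x x = x := meet_left_of_mem hT r (ra_start hT r x)

lemma meet_eq_of_cons {x x₁ y : V} (h : RA hT r x = x :: RA hT r x₁) (hx : x ∉ RA hT r y) :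
    meet hT r x y = meet hT r x₁ y := by
  rw [meet, h, firstIn_cons_neg (show x ∉ {v | v ∈ RA hT r y} from hx)]
  rfl

lemma adj_dichotomy {x x₁ : V} (hadj : T.Adj x x₁) :
    RA hT r x = x :: RA hT r x₁ ∨ RA hT r x₁ = x₁ :: RA hT r x := by
  by_cases hx : x₁ ∈ RA hT r x
  · left
    have hxnot : x ∉ RA hT r x₁ := by
      intro hmem
      exact hadj.ne (ra_eq_of_mem_mem hT r hmem hx)
    have hp : (SimpleGraph.Walk.cons hadj (pathTo hT r x₁)).IsPath :=
      (pathTo_isPath hT r x₁).cons hxnot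
    have := pathTo_unique hT r _ hp
    calc RA hT r x = (pathTo hT r x).support := rfl
      _ = (SimpleGraph.Walk.cons hadj (pathTo hT r x₁)).support := by rw [this]
      _ = x :: RA hT r x₁ := by rw [SimpleGraph.Walk.support_cons]; rfl
  · right
    have hp : (SimpleGraph.Walk.cons hadj.symm (pathTo hT r x)).IsPath :=
      (pathTo_isPath hT r x).cons hx
    have := pathTo_unique hT r _ hp
    calc RA hT r x₁ = (pathTo hT r x₁).support := rfl
      _ = (SimpleGraph.Walk.cons hadj.symm (pathTo hT r x)).support := by rw [this]
      _ = x₁ :: RA hT r x := by rw [SimpleGraph.Walk.support_cons]; rfl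

/-- If `t` occurs in the labels of the endpoints of a walk whose support lies in the
`t`-set, then `t` occurs at every vertex between `x` and `meet x y` on the root path. -/
lemma lab_walk_between {P : V → Prop} {x y : V} (w : T.Walk x y)
    (hs : ∀ z ∈ w.support, P z) :
    ∀ u, u ∈ RA hT r x → meet hT r x y ∈ RA hT r u → P u := by
  induction w with
  | nil =>
    intro u h1 h2
    rw [meet_self hT r] at h2
    have : u = _ := ra_eq_of_mem_mem hT r h1 h2
    subst this
    exact hs _ (SimpleGraph.Walk.start_mem_support _)
  | @cons a b c hadj w ih =>
    intro u h1 h2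
    have hs' : ∀ z ∈ w.support, P z := fun z hz =>
      hs z (by rw [SimpleGraph.Walk.support_cons]; exact List.mem_cons_of_mem _ hz)
    have hsa : P a := hs a (SimpleGraph.Walk.start_mem_support _)
    by_cases hxy : a ∈ RA hT r c
    · rw [meet_left_of_mem hT r hxy] at h2
      have : u = a := ra_eq_of_mem_mem hT r h1 h2
      subst this
      exact hsa
    · rcases adj_dichotomy hT r hadj with hA | hB
      · have hm : meet hT r a c = meet hT r b c := meet_eq_of_cons hT r hA hxy
        rw [hA] at h1
        rcases List.mem_cons.mp h1 with rfl | h1'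
        · exact hsa
        · exact ih hs' u h1' (by rw [← hm]; exact h2)
      · by_cases hby : b ∈ RA hT r c
        · exfalso
          apply hxy
          have hab : a ∈ RA hT r b := by
            rw [hB]; exact List.mem_cons_of_mem _ (ra_start hT r a)
          exact ra_mem_trans hT r hab hby
        · have hm : meet hT r b c = meet hT r a c := meet_eq_of_cons hT r hB hby
          have h1'' : u ∈ RA hT r b := by rw [hB]; exact List.mem_cons_of_mem _ h1
          exact ih hs' u h1'' (by rw [hm]; exact h2)

end MeetAux

section ClosureAux

open SimpleGraph

variable {V : Type} {T : SimpleGraph V} (hT : T.IsTree) (r : V)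

/-- The attachment point of `m` to the subtree spanned by `W`. -/
noncomputable def gOf (m : V) (W : List V) : V :=
  (firstIn (RA hT r m) {v | ∃ w ∈ W, v ∈ RA hT r w}).getD r

lemma gOf_spec (m : V) (W : List V) (hrW : r ∈ W) :
    ∃ l₁ l₂, RA hT r m = l₁ ++ gOf hT r m W :: l₂ ∧
      (∃ c ∈ W, gOf hT r m W ∈ RA hT r c) ∧
      ∀ z ∈ l₁, ¬ ∃ w ∈ W, z ∈ RA hT r w := by
  obtain ⟨g₀, hg₀⟩ := firstIn_isSome (l := RA hT r m) (s := {v | ∃ w ∈ W, v ∈ RA hT r w})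
    (ra_end hT r m) ⟨r, hrW, ra_start hT r r⟩
  obtain ⟨l₁, l₂, e, h1, h2⟩ := firstIn_spec hg₀
  rw [gOf, hg₀]
  exact ⟨l₁, l₂, e, h1, h2⟩

def ClosedW (W : List V) : Prop :=
  r ∈ W ∧ ∀ x ∈ W, ∀ y ∈ W, meet hT r x y ∈ W

/-- Key step: meets with the new vertex `m` reduce to meets with its gate `g`. -/
lemma meet_new_eq_meet_gate {m : V} {W : List V} (hrW : r ∈ W) {c : V} (hc : c ∈ W) :
    meet hT r m c = meet hT r (gOf hT r m W) c := by
  obtain ⟨l₁, l₂, e, _, hfail⟩ := gOf_spec hT r m W hrW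
  have hnm : gOf hT r m W ∉ l₁ := by
    intro hmem
    obtain ⟨_, l₂', e', ⟨c', hc', hgc'⟩, _⟩ := gOf_spec hT r m W hrW
    exact hfail _ hmem ⟨c', hc', hgc'⟩
  have hra : RA hT r (gOf hT r m W) = gOf hT r m W :: l₂ := ra_decomp hT r e hnm
  have e2 : RA hT r m = l₁ ++ RA hT r (gOf hT r m W) := by rw [hra, e]
  rw [meet, meet, e2, firstIn_append_left_none]
  intro z hz hzc
  exact hfail z hz ⟨c, hc, hzc⟩

lemma meet_gate_mem {m : V} {W : List V} (hW : ClosedW hT r W) {c : V} (hc : c ∈ W) :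
    meet hT r (gOf hT r m W) c ∈ W ∨ meet hT r (gOf hT r m W) c = gOf hT r m W := by
  set g := gOf hT r m W with hg
  obtain ⟨l₁, l₂, e, ⟨c', hc', hgc'⟩, hfail⟩ := gOf_spec hT r m W hW.1
  set l' := meet hT r c' c with hl'
  have hl'W : l' ∈ W := hW.2 c' hc' c hc
  have hcommons : ∀ v, v ∈ RA hT r g → v ∈ RA hT r c → v ∈ RA hT r l' := by
    intro v hv1 hv2
    exact mem_ra_meet hT r (ra_mem_trans hT r hv1 hgc') hv2
  have hgc'sfx : RA hT r g <:+ RA hT r c' := ra_suffix hT r hgc'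
  have hl'sfx : RA hT r l' <:+ RA hT r c' := ra_suffix hT r (meet_mem_left hT r c' c)
  rcases List.suffix_or_suffix_of_suffix hl'sfx hgc'sfx with hcase | hcase
  · -- RA l' <:+ RA g : meet g c = l'
    left
    have hl'g : l' ∈ RA hT r g := hcase.subset (ra_start hT r l')
    have hl'c : l' ∈ RA hT r c := meet_mem_right hT r c' c
    -- meet g c is the first elem of RA g in RA c
    obtain ⟨m₁, m₂, em, hmm, hmfail⟩ := meet_spec hT r g c
    set m0 := meet hT r g c with hm0
    have hm0l' : m0 ∈ RA hT r l' := hcommons m0 (meet_mem_left hT r g c) hmm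
    have hl'nm : l' ∉ m₁ := fun hmem => hmfail _ hmem hl'c
    have hl'm0 : l' ∈ RA hT r m0 := by
      have hra0 : RA hT r m0 = m0 :: m₂ := ra_decomp hT r em (fun hmem => hmfail _ hmem hmm)
      rw [em] at hl'g
      rcases List.mem_append.mp hl'g with hx | hx
      · exact absurd hx hl'nm
      · rw [hra0]; exact hx
    have : m0 = l' := ra_eq_of_mem_mem hT r hm0l' hl'm0
    show m0 ∈ W
    rw [this]; exact hl'W
  · -- RA g <:+ RA l' : g ∈ RA c, so meet g c = g
    right
    have hgl' : g ∈ RA hT r l' := hcase.subset (ra_start hT r g)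
    have hgc : g ∈ RA hT r c := ra_mem_trans hT r hgl' (meet_mem_right hT r c' c)
    exact meet_left_of_mem hT r hgc

lemma meet_new_gate {m : V} {W : List V} (hW : ClosedW hT r W) :
    meet hT r m (gOf hT r m W) = gOf hT r m W := by
  set g := gOf hT r m W with hg
  obtain ⟨l₁, l₂, e, ⟨c', hc', hgc'⟩, hfail⟩ := gOf_spec hT r m W hW.1
  have hnm : g ∉ l₁ := fun hmem => hfail _ hmem ⟨c', hc', hgc'⟩
  have hra : RA hT r g = g :: l₂ := ra_decomp hT r e hnm
  have e2 : RA hT r m = l₁ ++ RA hT r g := by rw [hra, e]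
  have hside : ∀ z ∈ l₁, z ∉ {v | v ∈ RA hT r g} := fun z hz hzg =>
    hfail z hz ⟨c', hc', ra_mem_trans hT r hzg hgc'⟩
  rw [meet, e2, firstIn_append_left_none hside, ra_cons hT r g,
    firstIn_cons_pos (show g ∈ {v | v ∈ g :: (RA hT r g).tail} from List.mem_cons_self)]
  rfl

lemma closedW_step {m : V} {W : List V} (hW : ClosedW hT r W) :
    ClosedW hT r (m :: gOf hT r m W :: W) := by
  set g := gOf hT r m W with hg
  have hmeets : ∀ x ∈ (m :: g :: W), meet hT r m x ∈ m :: g :: W := by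
    intro x hx
    rcases List.mem_cons.mp hx with rfl | hx
    · rw [meet_self hT r]; exact List.mem_cons_self
    rcases List.mem_cons.mp hx with rfl | hx
    · rw [meet_new_gate hT r hW]
      exact List.mem_cons_of_mem _ (List.mem_cons_self)
    · rw [meet_new_eq_meet_gate hT r hW.1 hx]
      rcases meet_gate_mem hT r hW (m := m) hx with h | h
      · exact List.mem_cons_of_mem _ (List.mem_cons_of_mem _ h)
      · rw [h]; exact List.mem_cons_of_mem _ (List.mem_cons_self)
  have hmeetsg : ∀ x ∈ (m :: g :: W), meet hT r g x ∈ m :: g :: W := by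
    intro x hx
    rcases List.mem_cons.mp hx with rfl | hx
    · rw [meet_comm hT r, meet_new_gate hT r hW]
      exact List.mem_cons_of_mem _ (List.mem_cons_self)
    rcases List.mem_cons.mp hx with rfl | hx
    · rw [meet_self hT r]; exact List.mem_cons_of_mem _ (List.mem_cons_self)
    · rcases meet_gate_mem hT r hW (m := m) hx with h | h
      · exact List.mem_cons_of_mem _ (List.mem_cons_of_mem _ h)
      · rw [h]; exact List.mem_cons_of_mem _ (List.mem_cons_self)
  refine ⟨List.mem_cons_of_mem _ (List.mem_cons_of_mem _ hW.1), ?_⟩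
  intro x hx y hy
  rcases List.mem_cons.mp hx with rfl | hx'
  · exact hmeets y hy
  rcases List.mem_cons.mp hx' with rfl | hx''
  · exact hmeetsg y hy
  · -- x ∈ W
    rcases List.mem_cons.mp hy with rfl | hy'
    · rw [meet_comm hT r]; exact hmeets x hx
    rcases List.mem_cons.mp hy' with rfl | hy''
    · rw [meet_comm hT r]; exact hmeetsg x hx
    · exact List.mem_cons_of_mem _ (List.mem_cons_of_mem _ (hW.2 x hx'' y hy''))

noncomputable def buildW : List V → List V
  | [] => [r]
  | [m] => [m, r]
  | m :: ms => m :: gOf hT r m (buildW ms) :: buildW ms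

lemma closedW_cons_of_mem {m : V} {W : List V} (hW : ClosedW hT r W)
    (hg : gOf hT r m W ∈ W) : ClosedW hT r (m :: W) := by
  have h := closedW_step hT r (m := m) hW
  set g := gOf hT r m W with hgdef
  refine ⟨List.mem_cons_of_mem _ hW.1, ?_⟩
  intro x hx y hy
  have hx' : x ∈ m :: g :: W := by
    rcases List.mem_cons.mp hx with rfl | hx
    · exact List.mem_cons_self
    · exact List.mem_cons_of_mem _ (List.mem_cons_of_mem _ hx)
  have hy' : y ∈ m :: g :: W := by
    rcases List.mem_cons.mp hy with rfl | hy
    · exact List.mem_cons_self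
    · exact List.mem_cons_of_mem _ (List.mem_cons_of_mem _ hy)
  have := h.2 x hx' y hy'
  rcases List.mem_cons.mp this with h1 | h1
  · rw [h1]; exact List.mem_cons_self
  rcases List.mem_cons.mp h1 with h2 | h2
  · rw [h2]; exact List.mem_cons_of_mem _ hg
  · exact List.mem_cons_of_mem _ h2

lemma gOf_singleton_root (m : V) : gOf hT r m [r] = r := by
  obtain ⟨l₁, l₂, e, ⟨c, hc, hgc⟩, _⟩ := gOf_spec hT r m [r] (List.mem_singleton.mpr rfl)
  rcases List.mem_singleton.mp hc with rfl
  rw [ra_root hT] at hgc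
  exact List.mem_singleton.mp hgc

lemma closedW_root : ClosedW hT r [r] := by
  refine ⟨List.mem_cons_self, ?_⟩
  intro x hx y hy
  rw [List.mem_singleton.mp hx, List.mem_singleton.mp hy, meet_self hT r]
  exact List.mem_cons_self

lemma buildW_closed (ms : List V) : ClosedW hT r (buildW hT r ms) := by
  induction ms with
  | nil => exact closedW_root hT r
  | cons m ms ih =>
    cases ms with
    | nil =>
      show ClosedW hT r (m :: [r])
      exact closedW_cons_of_mem hT r (closedW_root hT r)
        (by rw [gOf_singleton_root hT r m]; exact List.mem_cons_self)
    | cons m' ms' =>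
      exact closedW_step hT r ih

lemma buildW_root (ms : List V) : r ∈ buildW hT r ms := (buildW_closed hT r ms).1

lemma buildW_mem (ms : List V) : ∀ m ∈ ms, m ∈ buildW hT r ms := by
  induction ms with
  | nil => intro m hm; simp at hm
  | cons m₀ ms ih =>
    intro m hm
    rcases List.mem_cons.mp hm with rfl | hm
    · cases ms with
      | nil => exact List.mem_cons_self
      | cons m' ms' => exact List.mem_cons_self
    · cases ms with
      | nil => simp at hm
      | cons m' ms' =>
        exact List.mem_cons_of_mem _ (List.mem_cons_of_mem _ (ih m hm))

lemma buildW_length : ∀ ms : List V, ms ≠ [] → (buildW hT r ms).length ≤ 2 * ms.length := by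
  intro ms
  induction ms with
  | nil => intro h; exact absurd rfl h
  | cons m ms ih =>
    intro _
    cases ms with
    | nil => simp [buildW]
    | cons m' ms' =>
      have hlen := ih (by simp)
      show (m :: gOf hT r m (buildW hT r (m' :: ms')) :: buildW hT r (m' :: ms')).length ≤ _
      simp only [List.length_cons] at hlen ⊢
      omega

end ClosureAux


section AWAux

open SimpleGraph

variable {V : Type} {T : SimpleGraph V} (hT : T.IsTree) (r : V)

/-- The nearest element of `W` towards the root. -/
noncomputable def aW (W : List V) (v : V) : V := (firstIn (RA hT r v) {x | x ∈ W}).getD r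

lemma aW_spec (W : List V) (hrW : r ∈ W) (v : V) :
    aW hT r W v ∈ W ∧ ∃ l₁ l₂, RA hT r v = l₁ ++ aW hT r W v :: l₂ ∧ (∀ z ∈ l₁, z ∉ W) ∧
      RA hT r (aW hT r W v) = aW hT r W v :: l₂ := by
  obtain ⟨m, hm⟩ := firstIn_isSome (l := RA hT r v) (s := {x | x ∈ W}) (ra_end hT r v) hrW
  obtain ⟨l₁, l₂, e, h1, h2⟩ := firstIn_spec hm
  have hme : aW hT r W v = m := by rw [aW, hm]; rfl
  rw [hme]
  exact ⟨h1, l₁, l₂, e, h2, ra_decomp hT r e (fun hmem => h2 _ hmem h1)⟩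

lemma aW_mem (W : List V) (hrW : r ∈ W) (v : V) : aW hT r W v ∈ W := (aW_spec hT r W hrW v).1

lemma aW_mem_ra (W : List V) (hrW : r ∈ W) (v : V) : aW hT r W v ∈ RA hT r v := by
  obtain ⟨_, l₁, l₂, e, _, _⟩ := aW_spec hT r W hrW v
  rw [e]; exact List.mem_append_right _ (List.mem_cons_self)

lemma aW_of_mem {W : List V} {w : V} (hw : w ∈ W) : aW hT r W w = w := by
  rw [aW, ra_cons hT r w, firstIn_cons_pos (show w ∈ {x | x ∈ W} from hw)]
  rfl

/-- The first `W`-element of a root path comes before (towards the root of) any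
other `W`-element of the root path. -/
lemma aW_before {W : List V} (hrW : r ∈ W) {u ℓ : V} (hℓu : ℓ ∈ RA hT r u) (hℓW : ℓ ∈ W) :
    ℓ ∈ RA hT r (aW hT r W u) := by
  obtain ⟨haW, l₁, l₂, e, hfail, hra⟩ := aW_spec hT r W hrW u
  rw [e] at hℓu
  rcases List.mem_append.mp hℓu with h | h
  · exact absurd hℓW (hfail _ h)
  · rw [hra]; exact h

lemma aW_fiber {W : List V} (hrW : r ∈ W) {v u : V} {l₁ l₂ : List V}
    (e : RA hT r v = l₁ ++ aW hT r W v :: l₂) (hfail : ∀ z ∈ l₁, z ∉ W) (hu : u ∈ l₁) :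
    aW hT r W u = aW hT r W v := by
  have huv : u ∈ RA hT r v := by rw [e]; exact List.mem_append_left _ hu
  have hsuf : RA hT r u <:+ RA hT r v := ra_suffix hT r huv
  have hra : RA hT r (aW hT r W v) = aW hT r W v :: l₂ :=
    ra_decomp hT r e (fun hmem => hfail _ hmem (aW_spec hT r W hrW v).1)
  have hrasuf : RA hT r (aW hT r W v) <:+ RA hT r v :=
    ra_suffix hT r (by rw [e]; exact List.mem_append_right _ (List.mem_cons_self))
  rcases List.suffix_or_suffix_of_suffix hsuf hrasuf with hcase | hcase
  · exfalso
    have hua : u ∈ RA hT r (aW hT r W v) := hcase.subset (ra_start hT r u)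
    have hnd : (RA hT r v).Nodup := ra_nodup hT r v
    rw [e] at hnd
    have hdisj := List.disjoint_of_nodup_append hnd
    rw [hra] at hua
    exact hdisj hu hua
  · obtain ⟨pre, hpre⟩ := hcase
    obtain ⟨qq, hq⟩ := hsuf
    have e2 : RA hT r v = l₁ ++ RA hT r (aW hT r W v) := by rw [hra]; exact e
    have e3 : (qq ++ pre) ++ RA hT r (aW hT r W v) = l₁ ++ RA hT r (aW hT r W v) := by
      rw [List.append_assoc, hpre, hq, e2]
    have e4 : qq ++ pre = l₁ := List.append_cancel_right e3
    have hprefail : ∀ z ∈ pre, z ∉ W := fun z hz =>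
      hfail z (by rw [← e4]; exact List.mem_append_right _ hz)
    rw [aW, ← hpre, firstIn_append_left_none (s := {x | x ∈ W}) hprefail, hra,
      firstIn_cons_pos (show aW hT r W v ∈ {x | x ∈ W} from (aW_spec hT r W hrW v).1)]
    rfl

end AWAux

section ReachAux

open SimpleGraph

lemma reach_of_chain {X : Type} {G : SimpleGraph X} {P : Set X} :
    ∀ (l : List X) (a : X), List.Chain G.Adj a l → (∀ x ∈ a :: l, x ∈ P) →
      ∀ b ∈ a :: l, ∀ (ha : a ∈ P) (hb : b ∈ P),
        (G.induce P).Reachable ⟨a, ha⟩ ⟨b, hb⟩ := by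
  intro l
  induction l with
  | nil =>
    intro a _ _ b hb ha hbP
    have : b = a := List.mem_singleton.mp hb
    subst this
    exact SimpleGraph.Reachable.refl _
  | cons c l ih =>
    intro a hch hP b hb ha hbP
    have hadj : G.Adj a c := (List.chain_cons.mp hch).1
    have hch' := (List.chain_cons.mp hch).2
    have hPc : c ∈ P := hP c (List.mem_cons_of_mem _ (List.mem_cons_self))
    have hP' : ∀ x ∈ c :: l, x ∈ P := fun x hx => hP x (List.mem_cons_of_mem _ hx)
    have hstep : (G.induce P).Reachable ⟨a, ha⟩ ⟨c, hPc⟩ :=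
      SimpleGraph.Adj.reachable (show G.Adj a c from hadj)
    rcases List.mem_cons.mp hb with rfl | hb'
    · exact SimpleGraph.Reachable.refl _
    · exact hstep.trans (ih c hch' hP' b hb' hPc hbP)

lemma reach2_of_chain {X : Type} {G : SimpleGraph X} {P : Set X} {Q : Set ↥P} :
    ∀ (l : List X) (a : X), List.Chain G.Adj a l →
      (∀ x ∈ a :: l, x ∈ P) → (∀ x (hx : x ∈ P), x ∈ a :: l → (⟨x, hx⟩ : ↥P) ∈ Q) →
      ∀ b ∈ a :: l, ∀ (ha : a ∈ P) (hb : b ∈ P) (ha' : (⟨a, ha⟩ : ↥P) ∈ Q)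
        (hb' : (⟨b, hb⟩ : ↥P) ∈ Q),
        ((G.induce P).induce Q).Reachable ⟨⟨a, ha⟩, ha'⟩ ⟨⟨b, hb⟩, hb'⟩ := by
  intro l
  induction l with
  | nil =>
    intro a _ _ _ b hb ha hbP ha' hb'
    have : b = a := List.mem_singleton.mp hb
    subst this
    exact SimpleGraph.Reachable.refl _
  | cons c l ih =>
    intro a hch hP hQ b hb ha hbP ha' hb'
    have hadj : G.Adj a c := (List.chain_cons.mp hch).1
    have hch' := (List.chain_cons.mp hch).2
    have hPc : c ∈ P := hP c (List.mem_cons_of_mem _ (List.mem_cons_self))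
    have hQc : (⟨c, hPc⟩ : ↥P) ∈ Q := hQ c hPc (List.mem_cons_of_mem _ (List.mem_cons_self))
    have hP' : ∀ x ∈ c :: l, x ∈ P := fun x hx => hP x (List.mem_cons_of_mem _ hx)
    have hQ' : ∀ x (hx : x ∈ P), x ∈ c :: l → (⟨x, hx⟩ : ↥P) ∈ Q := fun x hx hmem =>
      hQ x hx (List.mem_cons_of_mem _ hmem)
    have hstep : ((G.induce P).induce Q).Reachable ⟨⟨a, ha⟩, ha'⟩ ⟨⟨c, hPc⟩, hQc⟩ :=
      SimpleGraph.Adj.reachable (show G.Adj a c from hadj)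
    rcases List.mem_cons.mp hb with rfl | hb''
    · exact SimpleGraph.Reachable.refl _
    · exact hstep.trans (ih c hch' hP' hQ' b hb'' hPc hbP hQc hb')

end ReachAux

section AtomAux

lemma varToNull_inj_on {s t : Tm} (hs : ¬ s.isNull) (ht : ¬ t.isNull)
    (h : varToNull s = varToNull t) : s = t := by
  cases s <;> cases t <;> simp_all [varToNull, Tm.isNull]

lemma map_varToNull_inj : ∀ {l₁ l₂ : List Tm}, (∀ t ∈ l₁, ¬ t.isNull) →
    (∀ t ∈ l₂, ¬ t.isNull) → l₁.map varToNull = l₂.map varToNull → l₁ = l₂ := by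
  intro l₁
  induction l₁ with
  | nil =>
    intro l₂ _ _ h
    cases l₂ with
    | nil => rfl
    | cons b l => simp at h
  | cons a l ih =>
    intro l₂ h1 h2 h
    cases l₂ with
    | nil => simp at h
    | cons b l₂' =>
      simp only [List.map_cons, List.cons.injEq] at h
      rw [varToNull_inj_on (h1 a (List.mem_cons_self)) (h2 b (List.mem_cons_self)) h.1,
        ih (fun t ht => h1 t (List.mem_cons_of_mem _ ht))
          (fun t ht => h2 t (List.mem_cons_of_mem _ ht)) h.2]

lemma atom_varToNull_inj {a b : Atom} (ha : ∀ t ∈ a.args, ¬ t.isNull)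
    (hb : ∀ t ∈ b.args, ¬ t.isNull) (h : a.map varToNull = b.map varToNull) : a = b := by
  cases a with
  | mk ra aa =>
    cases b with
    | mk rb ba =>
      simp only [Atom.map, Atom.mk.injEq] at h ⊢
      exact ⟨h.1, map_varToNull_inj ha hb h.2⟩

end AtomAux

section MainTreeLemma

open SimpleGraph

/-- Key combinatorial lemma: a subset of the atoms of an acyclic instance can be
enlarged, inside the instance, to an acyclic set of atoms of at most twice the size. -/
lemma exists_acyclic_subset (qa : CQ) (hnn : ∀ a ∈ qa.atoms, ∀ t ∈ a.args, ¬ t.isNull)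
    (hac : AcyclicInst qa.inst)
    (astar : Atom) (hstar : astar ∈ qa.atoms) (bs : List Atom)
    (hbs : ∀ b ∈ bs, b ∈ qa.atoms) (hne : bs ≠ []) (fr : List ℕ) :
    ∃ s : Finset Atom, s ⊆ qa.atoms ∧ astar ∈ s ∧ (∀ b ∈ bs, b ∈ s) ∧
      s.card ≤ 2 * bs.length ∧ AcyclicInst (CQ.inst ⟨fr, s⟩) := by
  classical
  rcases hac with hempty | ⟨V, T, lab, hTree, hmem, hsurj, hconn⟩
  · exfalso
    have : astar.map varToNull ∈ qa.inst := ⟨astar, hstar, rfl⟩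
    rw [hempty] at this
    exact this
  have hnode : ∀ b ∈ qa.atoms, ∃ v, lab v = b.map varToNull := fun b hb => hsurj _ ⟨b, hb, rfl⟩
  set nodeOf : Atom → V := fun b =>
    if hx : ∃ v, lab v = b.map varToNull then hx.choose else (hnode astar hstar).choose
    with hnodeOfDef
  have hnodeOf : ∀ b ∈ qa.atoms, lab (nodeOf b) = b.map varToNull := by
    intro b hb
    have hx : ∃ v, lab v = b.map varToNull := hnode b hb
    simp only [hnodeOfDef, dif_pos hx]
    exact hx.choose_spec
  set r := nodeOf astar with hr
  set ns : List V := bs.map nodeOf with hns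
  set Wf : List V := buildW hTree r ns with hWfdef
  have hrW : r ∈ Wf := buildW_root hTree r ns
  have hclosed := buildW_closed hTree r ns
  set St : Set V := {v | ∃ w ∈ Wf, v ∈ RA hTree r w} with hStdef
  have hWfSt : ∀ w ∈ Wf, w ∈ St := fun w hw => ⟨w, hw, ra_start hTree r w⟩
  have hStClosed : ∀ v ∈ St, ∀ u ∈ RA hTree r v, u ∈ St := by
    rintro v ⟨w, hw, hv⟩ u hu
    exact ⟨w, hw, ra_mem_trans hTree r hu hv⟩
  set s : Finset Atom := qa.atoms.filter (fun b => ∃ w ∈ Wf, lab w = b.map varToNull) with hsdef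
  have hsub : s ⊆ qa.atoms := Finset.filter_subset _ _
  have hmem_s : ∀ b ∈ qa.atoms, (∃ w ∈ Wf, lab w = b.map varToNull) → b ∈ s := by
    intro b hb hw
    rw [hsdef]
    exact Finset.mem_filter.mpr ⟨hb, hw⟩
  have hstar_s : astar ∈ s := hmem_s astar hstar ⟨r, hrW, hnodeOf astar hstar⟩
  have hbs_s : ∀ b ∈ bs, b ∈ s := by
    intro b hb
    exact hmem_s b (hbs b hb)
      ⟨nodeOf b, buildW_mem hTree r ns _ (List.mem_map_of_mem (f := nodeOf) hb), hnodeOf b (hbs b hb)⟩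
  have hcard : s.card ≤ 2 * bs.length := by
    have hbsne' : ns ≠ [] := by
      intro h
      apply hne
      rwa [hns, List.map_eq_nil_iff] at h
    set wit : Atom → V := fun b =>
      if hx : ∃ w ∈ Wf, lab w = b.map varToNull then hx.choose else r with hwitdef
    have hwit : ∀ b ∈ s, wit b ∈ Wf ∧ lab (wit b) = b.map varToNull := by
      intro b hb
      obtain ⟨hbqa, hx⟩ := Finset.mem_filter.mp hb
      simp only [hwitdef, dif_pos hx]
      exact ⟨hx.choose_spec.1, hx.choose_spec.2⟩
    have h1 : s.card ≤ Wf.toFinset.card := by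
      apply Finset.card_le_card_of_injOn wit
      · intro b hb
        rw [Finset.mem_coe, List.mem_toFinset]
        exact (hwit b hb).1
      · intro b hb b' hb' he
        have e1 := (hwit b hb).2
        have e2 := (hwit b' hb').2
        rw [he, e2] at e1
        exact (atom_varToNull_inj (hnn b' (hsub hb')) (hnn b (hsub hb)) e1).symm
    calc s.card ≤ Wf.toFinset.card := h1
      _ ≤ Wf.length := Wf.toFinset_card_le
      _ ≤ 2 * ns.length := buildW_length hTree r ns hbsne'
      _ = 2 * bs.length := by rw [hns, List.length_map]
  have hinst : CQ.inst ⟨fr, s⟩ = {x | ∃ w ∈ Wf, lab w = x} := by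
    ext x
    constructor
    · rintro ⟨b, hb, rfl⟩
      obtain ⟨hbqa, w, hw, hlabw⟩ := Finset.mem_filter.mp hb
      exact ⟨w, hw, hlabw⟩
    · rintro ⟨w, hw, rfl⟩
      obtain ⟨b, hb, hbe⟩ := hmem w
      exact ⟨b, hmem_s b hb ⟨w, hw, hbe.symm⟩, hbe⟩
  refine ⟨s, hsub, hstar_s, hbs_s, hcard, Or.inr ?_⟩
  refine ⟨{v : V // v ∈ St}, T.induce St, fun v => lab (aW hTree r Wf v.1), ?_, ?_, ?_, ?_⟩
  · -- IsTree
    have hreachroot : ∀ (x : {v : V // v ∈ St}),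
        (T.induce St).Reachable x ⟨r, hWfSt r hrW⟩ := by
      rintro ⟨v, hv⟩
      have hch : List.Chain T.Adj v ((RA hTree r v).tail) := by
        have h := ra_chain hTree r v
        rw [ra_cons hTree r v] at h
        exact h
      have hP : ∀ x ∈ v :: (RA hTree r v).tail, x ∈ St := by
        intro x hx
        rw [← ra_cons hTree r v] at hx
        exact hStClosed v hv x hx
      have hrmem : r ∈ v :: (RA hTree r v).tail := by
        rw [← ra_cons hTree r v]
        exact ra_end hTree r v
      exact reach_of_chain _ v hch hP r hrmem hv (hWfSt r hrW)
    constructor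
    · haveI : Nonempty {v : V // v ∈ St} := ⟨⟨r, hWfSt r hrW⟩⟩
      exact SimpleGraph.Connected.mk (fun x y => (hreachroot x).trans (hreachroot y).symm)
    · intro v c hc
      let hom : T.induce St →g T := ⟨Subtype.val, fun {a b} h => h⟩
      have hinj : Function.Injective (hom : {v : V // v ∈ St} → V) :=
        fun a b h => Subtype.ext h
      exact hTree.2 (c.map hom)
        ((SimpleGraph.Walk.map_isCycle_iff_of_injective hinj).mpr hc)
  · -- labels in the instance
    intro v
    rw [hinst]
    exact ⟨aW hTree r Wf v.1, aW_mem hTree r Wf hrW v.1, rfl⟩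
  · -- coverage
    intro a ha
    rw [hinst] at ha
    obtain ⟨w, hw, rfl⟩ := ha
    exact ⟨⟨w, hWfSt w hw⟩, by
      show lab (aW hTree r Wf w) = lab w
      rw [aW_of_mem hTree r hw]⟩
  · -- term connectivity
    intro t
    rintro ⟨⟨v₁, hSt₁⟩, hY₁⟩ ⟨⟨v₂, hSt₂⟩, hY₂⟩
    set a₁ := aW hTree r Wf v₁ with ha₁
    set a₂ := aW hTree r Wf v₂ with ha₂
    have haW₁ : a₁ ∈ Wf := aW_mem hTree r Wf hrW v₁
    have haW₂ : a₂ ∈ Wf := aW_mem hTree r Wf hrW v₂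
    set ℓ := meet hTree r a₁ a₂ with hℓ
    have hℓW : ℓ ∈ Wf := hclosed.2 a₁ haW₁ a₂ haW₂
    have ht₁ : t ∈ (lab a₁).args := hY₁
    have ht₂ : t ∈ (lab a₂).args := hY₂
    obtain ⟨wk0⟩ := hconn t ⟨a₁, ht₁⟩ ⟨a₂, ht₂⟩
    let homt : T.induce {v | t ∈ (lab v).args} →g T := ⟨Subtype.val, fun {a b} h => h⟩
    set wk : T.Walk a₁ a₂ := (wk0.map homt).copy rfl rfl with hwkdef
    have hwk : ∀ z ∈ wk.support, t ∈ (lab z).args := by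
      intro z hz
      rw [hwkdef, SimpleGraph.Walk.support_copy, SimpleGraph.Walk.support_map] at hz
      obtain ⟨z', _, rfl⟩ := List.mem_map.mp hz
      exact z'.2
    have hwkr : ∀ z ∈ wk.reverse.support, t ∈ (lab z).args := by
      intro z hz
      rw [SimpleGraph.Walk.support_reverse] at hz
      exact hwk z (List.mem_reverse.mp hz)
    have key₁ : ∀ u, u ∈ RA hTree r a₁ → ℓ ∈ RA hTree r u →
        t ∈ (lab (aW hTree r Wf u)).args := by
      intro u hu hℓu
      have haWu : aW hTree r Wf u ∈ RA hTree r a₁ :=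
        ra_mem_trans hTree r (aW_mem_ra hTree r Wf hrW u) hu
      have hℓaW : ℓ ∈ RA hTree r (aW hTree r Wf u) := aW_before hTree r hrW hℓu hℓW
      exact lab_walk_between hTree r wk hwk _ haWu hℓaW
    have key₂ : ∀ u, u ∈ RA hTree r a₂ → ℓ ∈ RA hTree r u →
        t ∈ (lab (aW hTree r Wf u)).args := by
      intro u hu hℓu
      have haWu : aW hTree r Wf u ∈ RA hTree r a₂ :=
        ra_mem_trans hTree r (aW_mem_ra hTree r Wf hrW u) hu
      have hℓaW : ℓ ∈ RA hTree r (aW hTree r Wf u) := aW_before hTree r hrW hℓu hℓW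
      have hm : meet hTree r a₂ a₁ = ℓ := (meet_comm hTree r a₂ a₁).trans hℓ.symm
      exact lab_walk_between hTree r wk.reverse hwkr _ haWu (by rw [hm]; exact hℓaW)
    -- generic segment lemma applications
    -- Part 1: from any v in the fiber of a := aW v to a
    have seg_fiber : ∀ (v : V) (hv : v ∈ St) (hY : t ∈ (lab (aW hTree r Wf v)).args),
        ∀ (hvSt : v ∈ St) (haSt : aW hTree r Wf v ∈ St)
          (hQv : t ∈ (lab (aW hTree r Wf v)).args)
          (hQa : t ∈ (lab (aW hTree r Wf (aW hTree r Wf v))).args),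
        ((T.induce St).induce {x : {v : V // v ∈ St} | t ∈ (lab (aW hTree r Wf x.1)).args}).Reachable
          ⟨⟨v, hvSt⟩, hQv⟩ ⟨⟨aW hTree r Wf v, haSt⟩, hQa⟩ := by
      intro v hv hY hvSt haSt hQv hQa
      obtain ⟨haWm, p₁, q₁, e₁, hfail₁, hra₁⟩ := aW_spec hTree r Wf hrW v
      set a := aW hTree r Wf v with ha
      have hpre : (p₁ ++ [a]) ++ q₁ = RA hTree r v := by rw [e₁]; simp
      obtain ⟨tl, htl⟩ : ∃ tl, p₁ ++ [a] = v :: tl := by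
        cases p₁ with
        | nil =>
          have h1 : RA hTree r v = a :: q₁ := by simpa using e₁
          have hh1 : (RA hTree r v).head? = some a := by rw [h1]; rfl
          have hh2 : (RA hTree r v).head? = some v := by rw [ra_cons hTree r v]; rfl
          have hva : v = a := Option.some.inj (hh2.symm.trans hh1)
          exact ⟨[], by rw [hva]; rfl⟩
        | cons c p' =>
          have h1 : RA hTree r v = c :: (p' ++ a :: q₁) := by simpa using e₁
          have hh1 : (RA hTree r v).head? = some c := by rw [h1]; rfl
          have hh2 : (RA hTree r v).head? = some v := by rw [ra_cons hTree r v]; rfl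
          have hvc : v = c := Option.some.inj (hh2.symm.trans hh1)
          exact ⟨p' ++ [a], by rw [hvc]; rfl⟩
      have hchain : List.Chain T.Adj v tl := by
        have hpref : (p₁ ++ [a]) <+: RA hTree r v := ⟨q₁, hpre⟩
        have h := (ra_chain hTree r v).prefix hpref
        rw [htl] at h
        exact h
      have hPmem : ∀ x ∈ v :: tl, x ∈ St := by
        intro x hx
        rw [← htl] at hx
        have : x ∈ RA hTree r v := by
          rw [← hpre]
          exact List.mem_append_left _ hx
        exact hStClosed v hv x this
      have hQmem : ∀ x (hx : x ∈ St), x ∈ v :: tl →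
          (⟨x, hx⟩ : {v : V // v ∈ St}) ∈
            {x : {v : V // v ∈ St} | t ∈ (lab (aW hTree r Wf x.1)).args} := by
        intro x hx hmem
        rw [← htl] at hmem
        rcases List.mem_append.mp hmem with hmem | hmem
        · show t ∈ (lab (aW hTree r Wf x)).args
          rw [aW_fiber hTree r hrW e₁ hfail₁ hmem]
          exact hY
        · have hxa : x = a := List.mem_singleton.mp hmem
          show t ∈ (lab (aW hTree r Wf x)).args
          rw [hxa, aW_of_mem hTree r haWm]
          exact hY
      have hamem : a ∈ v :: tl := by
        rw [← htl]
        exact List.mem_append_right _ (List.mem_singleton.mpr rfl)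
      exact reach2_of_chain _ v hchain hPmem hQmem a hamem hvSt haSt hQv hQa
    -- Part 2: from a₁ (in Wf, with t ∈ lab a₁) down to ℓ
    have seg_meet : ∀ (aa : V) (haaW : aa ∈ Wf)
        (hkey : ∀ u, u ∈ RA hTree r aa → ℓ ∈ RA hTree r u → t ∈ (lab (aW hTree r Wf u)).args)
        (haaSt : aa ∈ St) (hℓSt : ℓ ∈ St)
        (hQa : t ∈ (lab (aW hTree r Wf aa)).args)
        (hQℓ : t ∈ (lab (aW hTree r Wf ℓ)).args)
        (hℓaa : ℓ ∈ RA hTree r aa),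
        ((T.induce St).induce {x : {v : V // v ∈ St} | t ∈ (lab (aW hTree r Wf x.1)).args}).Reachable
          ⟨⟨aa, haaSt⟩, hQa⟩ ⟨⟨ℓ, hℓSt⟩, hQℓ⟩ := by
      intro aa haaW hkey haaSt hℓSt hQa hQℓ hℓaa
      obtain ⟨pre, hpre⟩ := ra_suffix hTree r hℓaa
      have hpre' : (pre ++ [ℓ]) ++ (RA hTree r ℓ).tail = RA hTree r aa := by
        rw [← hpre]
        conv_rhs => rw [ra_cons hTree r ℓ]
        simp
      obtain ⟨tl, htl⟩ : ∃ tl, pre ++ [ℓ] = aa :: tl := by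
        cases pre with
        | nil =>
          have h1 : RA hTree r aa = ℓ :: (RA hTree r ℓ).tail := by
            rw [← hpre']; rfl
          have hh1 : (RA hTree r aa).head? = some ℓ := by rw [h1]; rfl
          have hh2 : (RA hTree r aa).head? = some aa := by rw [ra_cons hTree r aa]; rfl
          have hva : aa = ℓ := Option.some.inj (hh2.symm.trans hh1)
          exact ⟨[], by rw [hva]; rfl⟩
        | cons c p' =>
          have h1 : RA hTree r aa = c :: (p' ++ ℓ :: (RA hTree r ℓ).tail) := by
            rw [← hpre']; simp
          have hh1 : (RA hTree r aa).head? = some c := by rw [h1]; rfl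
          have hh2 : (RA hTree r aa).head? = some aa := by rw [ra_cons hTree r aa]; rfl
          have hvc : aa = c := Option.some.inj (hh2.symm.trans hh1)
          exact ⟨p' ++ [ℓ], by rw [hvc]; rfl⟩
      have hchain : List.Chain T.Adj aa tl := by
        have hpref : (pre ++ [ℓ]) <+: RA hTree r aa := ⟨(RA hTree r ℓ).tail, hpre'⟩
        have h := (ra_chain hTree r aa).prefix hpref
        rw [htl] at h
        exact h
      have hmemRA : ∀ x ∈ aa :: tl, x ∈ RA hTree r aa := by
        intro x hx
        rw [← htl] at hx
        rw [← hpre']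
        exact List.mem_append_left _ hx
      have hPmem : ∀ x ∈ aa :: tl, x ∈ St := by
        intro x hx
        exact hStClosed aa (hWfSt aa haaW) x (hmemRA x hx)
      have hℓRA : ∀ x ∈ aa :: tl, ℓ ∈ RA hTree r x := by
        intro x hx
        rw [← htl] at hx
        rcases List.mem_append.mp hx with hmem | hmem
        · -- x ∈ pre
          have hxRA : x ∈ RA hTree r aa := by
            rw [← hpre]
            exact List.mem_append_left _ hmem
          have hsfx : RA hTree r x <:+ RA hTree r aa := ra_suffix hTree r hxRA
          have hsfxℓ : RA hTree r ℓ <:+ RA hTree r aa := ra_suffix hTree r hℓaa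
          rcases List.suffix_or_suffix_of_suffix hsfx hsfxℓ with hcase | hcase
          · exfalso
            have hxl : x ∈ RA hTree r ℓ := hcase.subset (ra_start hTree r x)
            have hnd : (RA hTree r aa).Nodup := ra_nodup hTree r aa
            rw [← hpre] at hnd
            exact (List.disjoint_of_nodup_append hnd) hmem hxl
          · exact hcase.subset (ra_start hTree r ℓ)
        · have hxl : x = ℓ := List.mem_singleton.mp hmem
          rw [hxl]
          exact ra_start hTree r ℓ
      have hQmem : ∀ x (hx : x ∈ St), x ∈ aa :: tl →
          (⟨x, hx⟩ : {v : V // v ∈ St}) ∈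
            {x : {v : V // v ∈ St} | t ∈ (lab (aW hTree r Wf x.1)).args} := by
        intro x hx hmem
        exact hkey x (hmemRA x hmem) (hℓRA x hmem)
      have hℓmem : ℓ ∈ aa :: tl := by
        rw [← htl]
        exact List.mem_append_right _ (List.mem_singleton.mpr rfl)
      exact reach2_of_chain _ aa hchain hPmem hQmem ℓ hℓmem haaSt hℓSt hQa hQℓ
    -- assemble
    have hℓSt : ℓ ∈ St := hWfSt ℓ hℓW
    have hℓRA₁ : ℓ ∈ RA hTree r a₁ := meet_mem_left hTree r a₁ a₂
    have hℓRA₂ : ℓ ∈ RA hTree r a₂ := meet_mem_right hTree r a₁ a₂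
    have hQa₁ : t ∈ (lab (aW hTree r Wf a₁)).args := by
      rw [aW_of_mem hTree r haW₁]; exact ht₁
    have hQa₂ : t ∈ (lab (aW hTree r Wf a₂)).args := by
      rw [aW_of_mem hTree r haW₂]; exact ht₂
    have hQℓ : t ∈ (lab (aW hTree r Wf ℓ)).args :=
      key₁ ℓ hℓRA₁ (ra_start hTree r ℓ)
    have r₁ := seg_fiber v₁ hSt₁ hY₁ hSt₁ (hWfSt a₁ haW₁) hY₁ hQa₁
    have r₂ := seg_meet a₁ haW₁ key₁ (hWfSt a₁ haW₁) hℓSt hQa₁ hQℓ hℓRA₁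
    have r₃ := seg_fiber v₂ hSt₂ hY₂ hSt₂ (hWfSt a₂ haW₂) hY₂ hQa₂
    have r₄ := seg_meet a₂ haW₂ key₂ (hWfSt a₂ haW₂) hℓSt hQa₂ hQℓ hℓRA₂
    exact ((r₁.trans r₂).trans r₄.symm).trans r₃.symm

end MainTreeLemma

section PaperAux

lemma assign_congr {h₁ h₂ : ℕ → Tm} (a : Atom) (H : ∀ v, Tm.var v ∈ a.args → h₁ v = h₂ v) :
    a.map (assign h₁) = a.map (assign h₂) := by
  unfold Atom.map
  congr 1
  apply List.map_congr_left
  intro t ht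
  cases t with
  | var v => exact H v ht
  | const n => rfl
  | null n => rfl

lemma eval_mono {q1 q2 : CQ} (hA : q2.atoms ⊆ q1.atoms) (hF : q2.free = q1.free) (I : Inst) :
    q1.eval I ⊆ q2.eval I := by
  rintro tup ⟨h, hhom, rfl⟩
  exact ⟨h, ⟨hhom.1, fun a ha => hhom.2 a (hA ha)⟩, by rw [hF]⟩

lemma const_lt_constShift {q : CQ} {a : Atom} (ha : a ∈ q.atoms) {c : ℕ}
    (hc : Tm.const c ∈ a.args) : c < q.constShift := by
  have h1 : c ∈ a.args.filterMap
      (fun t => match t with | Tm.const n => some n | _ => none) :=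
    List.mem_filterMap.mpr ⟨Tm.const c, hc, rfl⟩
  have h2 := le_foldr_max _ h1
  have h3 := Finset.le_sup (f := fun a : Atom =>
    (a.args.filterMap fun t => match t with | Tm.const n => some n | _ => none).foldr max 0) ha
  have : c ≤ q.atoms.sup (fun a : Atom =>
      (a.args.filterMap fun t => match t with | Tm.const n => some n | _ => none).foldr max 0) :=
    le_trans h2 h3
  unfold CQ.constShift
  omega

lemma tuple_getElem {qa p : CQ} {h : ℕ → Tm} (htup : qa.canonTuple = p.free.map h)
    {j : ℕ} (hj : j < qa.free.length) (hjp : j < p.free.length) :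
    h (p.free[j]'hjp) = qa.canonConst (qa.free[j]'hj) := by
  have hlen : qa.canonTuple.length = qa.free.length := by simp [CQ.canonTuple]
  have h1 := List.getElem_of_eq htup (show j < qa.canonTuple.length by omega)
  simp only [CQ.canonTuple, List.getElem_map] at h1
  exact h1.symm

/-- No "floating" free variables in a fired disjunct: every free variable of a
disjunct of a correct UCQ rewriting that fires on a well-formed CQ occurs in the
atoms of the disjunct. -/
lemma anchored (S : Finset TGD) (hSwf : ∀ τ ∈ S, τ.wf) (q : CQ) (hq : q.wf)
    (Q : List CQ) (hQ : IsUCQRewriting S q Q)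
    (qa : CQ) (hqa : qa.wf) (hlen2 : qa.free.length = q.free.length)
    (p : CQ) (hp : p ∈ Q) (h : ℕ → Tm)
    (hhom : p.homOf h qa.canonDB) (htup : qa.canonTuple = p.free.map h) :
    ∀ j, (hj : j < p.free.length) → p.free[j] ∈ varsOf p.atoms := by
  intro j hj
  by_contra hbad
  classical
  have hlen : qa.free.length = p.free.length := by
    have := congrArg List.length htup
    simpa [CQ.canonTuple] using this
  have hjq : j < qa.free.length := by omega
  -- fresh variable
  set fv : Tm → ℕ := fun t => match t with | Tm.var v => v | _ => 0 with hfv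
  set fz := (qa.atoms.sup fun a => (a.args.map fv).foldr max 0) + 1 with hfzdef
  have hfz_not : ∀ v ∈ varsOf qa.atoms, v < fz := by
    rintro v ⟨a, ha, hv⟩
    have h1 : v ∈ a.args.map fv := List.mem_map.mpr ⟨Tm.var v, hv, rfl⟩
    have h2 := le_foldr_max _ h1
    have h3 := Finset.le_sup (f := fun a : Atom => (a.args.map fv).foldr max 0) ha
    omega
  have hfz_vars : fz ∉ varsOf qa.atoms := fun hmem => lt_irrefl _ (hfz_not _ hmem)
  have hfz_free : fz ∉ qa.free := fun hmem => hfz_vars (hqa.2.1 fz hmem)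
  -- fresh relation symbol
  set fZ := (qa.atoms.sup Atom.rel) +
    ((q.atoms.sup Atom.rel) + (S.sup fun τ => (τ.body ∪ τ.head).sup Atom.rel)) + 1 with hfZdef
  have hfZq : ∀ a ∈ q.atoms, a.rel < fZ := by
    intro a ha
    have := Finset.le_sup (f := Atom.rel) ha
    omega
  have hfZS : ∀ τ ∈ S, ∀ a ∈ τ.body ∪ τ.head, a.rel < fZ := by
    intro τ hτ a ha
    have h1 : a.rel ≤ (τ.body ∪ τ.head).sup Atom.rel := Finset.le_sup ha
    have h2 : (τ.body ∪ τ.head).sup Atom.rel ≤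
        S.sup (fun τ => (τ.body ∪ τ.head).sup Atom.rel) := by
      have := Finset.le_sup (f := fun τ : TGD => (τ.body ∪ τ.head).sup Atom.rel) hτ
      exact this
    omega
  -- the modified query
  set xj := qa.free[j]'hjq with hxj
  set zatom : Atom := ⟨fZ, [Tm.var fz]⟩ with hzatom
  set qd : CQ := ⟨qa.free.map (fun v => if v = xj then fz else v), insert zatom qa.atoms⟩ with hqd
  have hqdwf : qd.wf := by
    refine ⟨?_, ?_, ?_⟩
    · apply List.Nodup.map_on _ hqa.1
      intro x hx y hy hxy
      by_cases hxx : x = xj <;> by_cases hyy : y = xj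
      · rw [hxx, hyy]
      · rw [if_pos hxx, if_neg hyy] at hxy
        exact absurd (hxy ▸ hy) hfz_free
      · rw [if_neg hxx, if_pos hyy] at hxy
        exact absurd (hxy.symm ▸ hx) hfz_free
      · rwa [if_neg hxx, if_neg hyy] at hxy
    · intro x hx
      obtain ⟨v, hv, rfl⟩ := List.mem_map.mp hx
      by_cases hvj : v = xj
      · rw [if_pos hvj]
        exact ⟨zatom, Finset.mem_insert_self _ _, List.mem_singleton.mpr rfl⟩
      · rw [if_neg hvj]
        obtain ⟨a, ha, hva⟩ := hqa.2.1 v hv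
        exact ⟨a, Finset.mem_insert_of_mem ha, hva⟩
    · intro a ha tt htt
      rcases Finset.mem_insert.mp ha with rfl | ha
      · have : tt = Tm.var fz := List.mem_singleton.mp htt
        rw [this]
        simp [Tm.isNull]
      · exact hqa.2.2 a ha tt htt
  have hshift : qd.constShift = qa.constShift := by
    unfold CQ.constShift
    congr 1
    show (insert zatom qa.atoms).sup _ = _
    rw [Finset.sup_insert]
    simp [hzatom]
  have hcc : qd.canonConst = qa.canonConst := by
    funext v
    unfold CQ.canonConst
    rw [hshift]
  have hdb : qa.canonDB ⊆ qd.canonDB := by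
    rintro x ⟨b, hb, rfl⟩
    refine ⟨b, ?_, ?_⟩
    · exact Finset.mem_coe.mpr (Finset.mem_insert_of_mem (Finset.mem_coe.mp hb))
    · simp only [hcc]
  -- the modified homomorphism fires
  set h₂ : ℕ → Tm := fun v => if v = p.free[j]'hj then Tm.const (fz + qa.constShift) else h v
    with hh₂
  have hhom₂ : p.homOf h₂ qd.canonDB := by
    constructor
    · intro v
      show ¬ (if v = p.free[j]'hj then Tm.const (fz + qa.constShift) else h v).isVar
      split
      · simp [Tm.isVar]
      · exact hhom.1 v
    · intro a ha
      have he : a.map (assign h₂) = a.map (assign h) := by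
        apply assign_congr
        intro v hv
        have hvne : v ≠ p.free[j]'hj := by
          intro e
          exact hbad ⟨a, ha, e ▸ hv⟩
        show (if v = p.free[j]'hj then Tm.const (fz + qa.constShift) else h v) = h v
        rw [if_neg hvne]
      rw [he]
      exact hdb (hhom.2 a ha)
  have htup₂ : qd.canonTuple = p.free.map h₂ := by
    apply List.ext_getElem
    · simp [CQ.canonTuple, hqd]
      omega
    · intro j' hj1 hj2
      have hj'qa : j' < qa.free.length := by
        simp [CQ.canonTuple, hqd] at hj1
        omega
      have hj'p : j' < p.free.length := by
        simpa using hj2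
      have hqdfree : qd.free[j']'(by simp [hqd]; omega) =
          (if qa.free[j']'hj'qa = xj then fz else qa.free[j']'hj'qa) := by
        show (qa.free.map fun v => if v = xj then fz else v)[j']'(by simp; omega) = _
        rw [List.getElem_map]
      show qd.canonTuple[j']'hj1 = (p.free.map h₂)[j']'hj2
      have hlhs0 : qd.canonTuple[j']'hj1 = qd.canonConst (qd.free[j']'(by simp [hqd]; omega)) := by
        show (qd.free.map qd.canonConst)[j']'hj1 = _
        exact List.getElem_map _
      have hr2 : (p.free.map h₂)[j']'hj2 = h₂ (p.free[j']'hj'p) := List.getElem_map _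
      rw [hlhs0, hqdfree, hr2]
      by_cases hjj : j' = j
      · have hcond : qa.free[j']'hj'qa = xj := by
          rw [hxj]
          exact (List.Nodup.getElem_inj_iff hqa.1).mpr hjj
        rw [if_pos hcond]
        have hpe : p.free[j']'hj'p = p.free[j]'hj := by simp only [hjj]
        have e2 : h₂ (p.free[j']'hj'p) = Tm.const (fz + qa.constShift) := by
          show (if p.free[j']'hj'p = p.free[j]'hj then Tm.const (fz + qa.constShift)
            else h (p.free[j']'hj'p)) = _
          rw [if_pos hpe]
        calc qd.canonConst fz = Tm.const (fz + qa.constShift) := by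
              unfold CQ.canonConst
              rw [hshift]
          _ = h₂ (p.free[j']'hj'p) := e2.symm
      · have hne1 : qa.free[j']'hj'qa ≠ xj := by
          rw [hxj]
          intro e
          exact hjj ((List.Nodup.getElem_inj_iff hqa.1).mp e)
        rw [if_neg hne1]
        have hne2 : p.free[j']'hj'p ≠ p.free[j]'hj := by
          intro e
          have e1 := tuple_getElem htup hj'qa hj'p
          have e2 := tuple_getElem htup hjq hj
          rw [e, e2] at e1
          unfold CQ.canonConst at e1
          have e3 : qa.free[j]'hjq + qa.constShift = qa.free[j']'hj'qa + qa.constShift :=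
            Tm.const.inj e1
          have e4 : qa.free[j]'hjq = qa.free[j']'hj'qa := by omega
          exact hjj ((List.Nodup.getElem_inj_iff hqa.1).mp e4.symm)
        have e2 : h₂ (p.free[j']'hj'p) = h (p.free[j']'hj'p) := by
          show (if p.free[j']'hj'p = p.free[j]'hj then Tm.const (fz + qa.constShift)
            else h (p.free[j']'hj'p)) = _
          rw [if_neg hne2]
        calc qd.canonConst (qa.free[j']'hj'qa) = qa.canonConst (qa.free[j']'hj'qa) := by
              rw [hcc]
          _ = h (p.free[j']'hj'p) := (tuple_getElem htup hj'qa hj'p).symm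
          _ = h₂ (p.free[j']'hj'p) := e2.symm
  have hcont : ContUnder S qd q := (hQ qd hqdwf).mpr ⟨p, hp, h₂, hhom₂, htup₂⟩
  -- the refuting model
  set I : Inst := {a : Atom | (∀ tt ∈ a.args, ¬ tt.isVar) ∧ (Tm.null 0 ∈ a.args → a.rel = fZ)}
    with hI
  have hInst : IsInstance I := fun a ha => ha.1
  have hSat : SatTGDs I S := by
    intro τ hτ hh hhnv hhb
    refine ⟨fun v => if v ∈ varsOf τ.body then hh v else Tm.const 0, ?_, ?_, ?_⟩
    · intro v
      show ¬ (if v ∈ varsOf τ.body then hh v else Tm.const 0).isVar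
      split
      · exact hhnv v
      · simp [Tm.isVar]
    · intro v hv
      show (if v ∈ varsOf τ.body then hh v else Tm.const 0) = hh v
      rw [if_pos hv]
    · intro a ha
      have hbodyvar : ∀ v ∈ varsOf τ.body, hh v ≠ Tm.null 0 := by
        intro v hv he
        obtain ⟨b, hbmem, hvb⟩ := hv
        have hbI := hhb b hbmem
        have hnull : Tm.null 0 ∈ (b.map (assign hh)).args := by
          show Tm.null 0 ∈ b.args.map (assign hh)
          exact List.mem_map.mpr ⟨Tm.var v, hvb, by rw [← he]; rfl⟩
        have hrel := hbI.2 hnull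
        have hlt := hfZS τ hτ b (Finset.mem_union_left _ hbmem)
        rw [show (b.map (assign hh)).rel = b.rel from rfl] at hrel
        omega
      constructor
      · intro tt htt
        obtain ⟨s0, hs0, rfl⟩ := List.mem_map.mp htt
        cases s0 with
        | var v =>
          show ¬ (if v ∈ varsOf τ.body then hh v else Tm.const 0).isVar
          split
          · exact hhnv v
          · simp [Tm.isVar]
        | const n => simp [assign, Tm.isVar]
        | null n => simp [assign, Tm.isVar]
      · intro hnull
        exfalso
        obtain ⟨s0, hs0, he⟩ := List.mem_map.mp hnull
        cases s0 with
        | const n => simp [assign] at he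
        | null n =>
          exact (hSwf τ hτ).2.2 a (Finset.mem_union_right _ ha) _ hs0 (by simp [Tm.isNull])
        | var v =>
          have he' : (if v ∈ varsOf τ.body then hh v else Tm.const 0) = Tm.null 0 := he
          by_cases hvb : v ∈ varsOf τ.body
          · rw [if_pos hvb] at he'
            exact hbodyvar v hvb he'
          · rw [if_neg hvb] at he'
            simp at he'
  -- the witness tuple
  set g : ℕ → Tm := fun v => if v = fz then Tm.null 0 else Tm.const 0 with hg
  have hghom : qd.homOf g I := by
    constructor
    · intro v
      show ¬ (if v = fz then Tm.null 0 else Tm.const 0).isVar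
      split <;> simp [Tm.isVar]
    · intro a ha
      rcases Finset.mem_insert.mp ha with rfl | ha
      · have hze : zatom.map (assign g) = ⟨fZ, [Tm.null 0]⟩ := by
          show Atom.mk fZ ([Tm.var fz].map (assign g)) = _
          simp only [List.map_cons, List.map_nil]
          congr 1
          show (if fz = fz then Tm.null 0 else Tm.const 0) :: [] = [Tm.null 0]
          rw [if_pos rfl]
        rw [hze]
        refine ⟨?_, fun _ => rfl⟩
        intro tt htt
        have : tt = Tm.null 0 := List.mem_singleton.mp htt
        rw [this]
        simp [Tm.isVar]
      · constructor
        · intro tt htt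
          obtain ⟨s0, hs0, rfl⟩ := List.mem_map.mp htt
          cases s0 with
          | var v =>
            show ¬ (if v = fz then Tm.null 0 else Tm.const 0).isVar
            split <;> simp [Tm.isVar]
          | const n => simp [assign, Tm.isVar]
          | null n => simp [assign, Tm.isVar]
        · intro hnull
          exfalso
          obtain ⟨s0, hs0, he⟩ := List.mem_map.mp hnull
          cases s0 with
          | const n => simp [assign] at he
          | null n => exact hqa.2.2 a ha _ hs0 (by simp [Tm.isNull])
          | var v =>
            have he' : (if v = fz then Tm.null 0 else Tm.const 0) = Tm.null 0 := he
            by_cases hvf : v = fz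
            · exact hfz_vars ⟨a, ha, hvf ▸ hs0⟩
            · rw [if_neg hvf] at he'
              simp at he'
  have htupmem : qd.free.map g ∈ qd.eval I := ⟨g, hghom, rfl⟩
  obtain ⟨g', hg'hom, he'⟩ := hcont I hInst hSat htupmem
  -- extract coordinate j
  have hjq2 : j < q.free.length := by omega
  have hlen3 : j < (qd.free.map g).length := by
    simp [hqd]
    omega
  have hfzj : qd.free[j]'(by simp [hqd]; omega) = fz := by
    show (qa.free.map fun v => if v = xj then fz else v)[j]'(by simp; omega) = fz
    rw [List.getElem_map, if_pos hxj.symm]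
  have hlhs : (qd.free.map g)[j]'hlen3 = Tm.null 0 := by
    rw [List.getElem_map]
    show g (qd.free[j]'(by simp [hqd]; omega)) = Tm.null 0
    rw [hfzj]
    show (if fz = fz then Tm.null 0 else Tm.const 0) = Tm.null 0
    rw [if_pos rfl]
  have hgval : g' (q.free[j]'hjq2) = Tm.null 0 := by
    have h2 := List.getElem_of_eq he' hlen3
    rw [hlhs] at h2
    rw [List.getElem_map] at h2
    exact h2.symm
  obtain ⟨a, ha, hva⟩ := hq.2.1 (q.free[j]'hjq2) (by exact List.getElem_mem _)
  have hmemI := hg'hom.2 a ha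
  have hnull0 : Tm.null 0 ∈ (a.map (assign g')).args := by
    show Tm.null 0 ∈ a.args.map (assign g')
    refine List.mem_map.mpr ⟨Tm.var (q.free[j]'hjq2), hva, ?_⟩
    rw [show assign g' (Tm.var (q.free[j]'hjq2)) = g' (q.free[j]'hjq2) from rfl, hgval]
  have hfe := hmemI.2 hnull0
  have hlt := hfZq a ha
  rw [show (a.map (assign g')).rel = a.rel from rfl] at hfe
  omega

end PaperAux

/-- Let `C` be a UCQ rewritable class of sets of tgds, `S ∈ C` a
finite set of tgds and `q` a CQ. If `q` is semantically acyclic under `S`, then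
there exists an acyclic CQ `q'` with at most `2·f_C(q,S)` atoms such that
`q ≡_S q'` — where `f_C(q,S)` is any bound `H` on the height (the maximal number of
atoms of a disjunct) of a UCQ rewriting of `q` and `S`. -/
theorem statement11 (C : Set (Finset TGD)) (hC : UCQRewritable C)
    (S : Finset TGD) (hSC : S ∈ C) (hSwf : ∀ τ ∈ S, τ.wf)
    (q : CQ) (hq : q.wf)
    (Q : List CQ) (hQ : IsUCQRewriting S q Q)
    (H : ℕ) (hH : ∀ p ∈ Q, p.atoms.card ≤ H)
    (hsa : SemAcyclic S q) :
    ∃ q' : CQ, q'.wf ∧ q'.Acyclic ∧ q'.free.length = q.free.length ∧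
      q'.atoms.card ≤ 2 * H ∧ EquivUnder S q q' := by
  classical
  obtain ⟨qa, hqaw, hqaac, hqalen, hqaeq⟩ := hsa
  obtain ⟨p, hp, h, hhom, htup⟩ := (hQ qa hqaw).mp hqaeq.2
  have hanch := anchored S hSwf q hq Q hQ qa hqaw hqalen p hp h hhom htup
  have hlen : qa.free.length = p.free.length := by
    have := congrArg List.length htup
    simpa [CQ.canonTuple] using this
  by_cases hpe : p.atoms = ∅
  · -- degenerate case: the fired disjunct has no atoms
    have hpfree : p.free = [] := by
      cases hpf : p.free with
      | nil => rfl
      | cons x l =>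
        exfalso
        obtain ⟨a, ha, -⟩ := hanch 0 (by rw [hpf]; simp)
        rw [hpe] at ha
        exact absurd ha (Finset.notMem_empty a)
    have hqfree : q.free = [] := by
      have : q.free.length = 0 := by
        rw [← hqalen, hlen, hpfree]
        rfl
      exact List.length_eq_zero_iff.mp this
    have hwf' : (⟨[], ∅⟩ : CQ).wf := ⟨List.nodup_nil, by simp, by simp⟩
    refine ⟨⟨[], ∅⟩, hwf', Or.inl (by simp [CQ.inst]), by simp [hqfree], by simp, ?_, ?_⟩
    · -- q ⊆ q'
      rintro I hI hS tup ⟨h0, hh0, rfl⟩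
      refine ⟨fun _ => Tm.const 0, ⟨fun v => by simp [Tm.isVar], fun a ha => absurd ha (by simp)⟩, ?_⟩
      rw [hqfree]
      rfl
    · -- q' ⊆ q, via the rewriting
      refine (hQ ⟨[], ∅⟩ hwf').mpr ⟨p, hp, fun _ => Tm.const 0,
        ⟨fun v => by simp [Tm.isVar], fun a ha => absurd ha (by rw [hpe]; simp)⟩, ?_⟩
      show CQ.canonTuple ⟨[], ∅⟩ = p.free.map _
      rw [hpfree]
      rfl
  · -- main case
    have hpne : p.atoms.Nonempty := Finset.nonempty_iff_ne_empty.mpr hpe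
    have hqane : qa.atoms.Nonempty := by
      obtain ⟨a0, ha0⟩ := hpne
      obtain ⟨b, hb, -⟩ := hhom.2 a0 ha0
      exact ⟨b, hb⟩
    let cf : Atom → ℕ := fun a =>
      (a.args.filterMap ((fun t => match t with | Tm.const n => some n | _ => none) :
        Tm → Option ℕ)).foldr max 0
    obtain ⟨astar, hastar, hsupeq⟩ := Finset.exists_mem_eq_sup qa.atoms hqane cf
    have hpbex : ∀ a ∈ p.atoms, ∃ b, b ∈ qa.atoms ∧
        b.map (assign fun v => qa.canonConst v) = a.map (assign h) := by
      intro a ha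
      obtain ⟨b, hb, he⟩ := hhom.2 a ha
      exact ⟨b, hb, he⟩
    set pb : Atom → Atom := fun a =>
      if hx : ∃ b, b ∈ qa.atoms ∧ b.map (assign fun v => qa.canonConst v) = a.map (assign h)
      then hx.choose else astar with hpbdef
    have hpbspec : ∀ a ∈ p.atoms, pb a ∈ qa.atoms ∧
        (pb a).map (assign fun v => qa.canonConst v) = a.map (assign h) := by
      intro a ha
      have hx := hpbex a ha
      simp only [hpbdef, dif_pos hx]
      exact hx.choose_spec
    set bs : List Atom := p.atoms.toList.map pb with hbsdef
    have hbsmem : ∀ b ∈ bs, b ∈ qa.atoms := by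
      intro b hb
      obtain ⟨a, ha, rfl⟩ := List.mem_map.mp hb
      exact (hpbspec a (Finset.mem_toList.mp ha)).1
    have hbsne : bs ≠ [] := by
      intro hnil
      exact hpe (by rwa [hbsdef, List.map_eq_nil_iff, Finset.toList_eq_nil] at hnil)
    obtain ⟨s, hsub, hstar_s, hbs_s, hcard, hacy⟩ :=
      exists_acyclic_subset qa hqaw.2.2 hqaac astar hastar bs hbsmem hbsne qa.free
    set q' : CQ := ⟨qa.free, s⟩ with hq'def
    have hsup : s.sup cf = qa.atoms.sup cf := by
      refine le_antisymm (Finset.sup_mono hsub) ?_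
      rw [hsupeq]
      exact Finset.le_sup hstar_s
    have hshift : q'.constShift = qa.constShift := by
      show s.sup cf + 1 = qa.atoms.sup cf + 1
      rw [hsup]
    have hcc : q'.canonConst = qa.canonConst := by
      funext v
      unfold CQ.canonConst
      rw [hshift]
    have hct : q'.canonTuple = qa.canonTuple := by
      unfold CQ.canonTuple
      show qa.free.map q'.canonConst = qa.free.map qa.canonConst
      rw [hcc]
    have hq'wf : q'.wf := by
      refine ⟨hqaw.1, ?_, fun a ha tt htt => hqaw.2.2 a (hsub ha) tt htt⟩
      intro x hx
      have hx' : x ∈ qa.free := hx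
      obtain ⟨j, hj, hxe⟩ := List.getElem_of_mem hx'
      have hjp : j < p.free.length := by omega
      obtain ⟨a, hap, hva⟩ := hanch j hjp
      have hval : h (p.free[j]'hjp) = qa.canonConst (qa.free[j]'hj) := tuple_getElem htup hj hjp
      have himg : Tm.const (qa.free[j]'hj + qa.constShift) ∈ (a.map (assign h)).args := by
        show _ ∈ a.args.map (assign h)
        refine List.mem_map.mpr ⟨Tm.var (p.free[j]'hjp), hva, ?_⟩
        rw [show assign h (Tm.var (p.free[j]'hjp)) = h (p.free[j]'hjp) from rfl, hval]
        rfl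
      rw [← (hpbspec a hap).2] at himg
      have himg' : Tm.const (qa.free[j]'hj + qa.constShift) ∈
          (pb a).args.map (assign fun v => qa.canonConst v) := himg
      obtain ⟨s0, hs0, he0⟩ := List.mem_map.mp himg'
      have hpbs : pb a ∈ s := hbs_s (pb a)
        (List.mem_map_of_mem (f := pb) (Finset.mem_toList.mpr hap))
      cases s0 with
      | var v =>
        have hv : v = qa.free[j]'hj := by
          have : qa.canonConst v = Tm.const (qa.free[j]'hj + qa.constShift) := he0
          unfold CQ.canonConst at this
          have := Tm.const.inj this
          omega
        refine ⟨pb a, hpbs, ?_⟩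
        rw [← hxe, ← hv]
        exact hs0
      | const c =>
        exfalso
        have hce : c = qa.free[j]'hj + qa.constShift := Tm.const.inj he0
        have hlt := const_lt_constShift (q := qa) (hpbspec a hap).1 hs0
        omega
      | null n =>
        exfalso
        exact hqaw.2.2 _ (hpbspec a hap).1 _ hs0 (by simp [Tm.isNull])
    have hfire' : q'.canonTuple ∈ UCQeval Q q'.canonDB := by
      refine ⟨p, hp, h, ⟨hhom.1, ?_⟩, by rw [hct]; exact htup⟩
      intro a ha
      rw [← (hpbspec a ha).2]
      refine ⟨pb a, ?_, ?_⟩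
      · exact Finset.mem_coe.mpr (hbs_s (pb a) (List.mem_map_of_mem (f := pb) (Finset.mem_toList.mpr ha)))
      · show (pb a).map (assign fun v => q'.canonConst v) = _
        rw [hcc]
    have hcont' : ContUnder S q' q := (hQ q' hq'wf).mpr hfire'
    have hcard' : q'.atoms.card ≤ 2 * H := by
      have h1 : bs.length = p.atoms.card := by
        rw [hbsdef, List.length_map, Finset.length_toList]
      have h2 := hH p hp
      show s.card ≤ 2 * H
      omega
    refine ⟨q', hq'wf, hacy, hqalen, hcard', ?_, hcont'⟩
    intro I hI hS
    exact Set.Subset.trans (hqaeq.1 I hI hS) (eval_mono (q1 := qa) (q2 := q') (show q'.atoms ⊆ qa.atoms from hsub) rfl I)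


end SemAcPaper
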